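/- arXiv:2201.07553 — 5 statements merged into one kernel-verified Lean document; each statement's English description precedes it below -/
import Mathlib

section
/- Let GF(q) be a finite field where q is a prime power and e ≥ 3 is a divisor of q − 1 with f = (q−1)/e > 1. Let I ⊂ {0, 1, …, e−1} with |I| = u and 2 ≤ u ≤ e−1, and let D′ = {C_i^e : i ∈ I}. Suppose there exist integers B and X such that B = (0,i)_e = (i,i)_e for all 1 ≤ i ≤ e−1 and X = (i,j)_e for all 1 ≤ i ≠ j ≤ e−1. Then: (i) for all 0 ≤ s ≠ t ≤ e−1, Δ(C_s^e, C_t^e) = B(C_s^e ∪ C_t^e) + X(G* \ (C_s^e ∪ C_t^e)) as multisets; (ii) D′ is a (q, u, (q−1)/e, 2B(u−1) + X(u−1)(u−2), Xu(u−1))-external partial difference family, which is proper when B ≠ X. -/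
open Finset

section Defs

variable {G : Type*} [AddGroup G] [DecidableEq G]

/-- The multiset of internal differences `x - y` (`x ≠ y`) of a finset. -/
def intDiff (D : Finset G) : Multiset G :=
  ((D ×ˢ D).filter fun p => p.1 ≠ p.2).val.map fun p => p.1 - p.2

/-- The multiset of external differences `x - y`, `x ∈ D₁`, `y ∈ D₂`. -/
def extDiff (D₁ D₂ : Finset G) : Multiset G :=
  (D₁ ×ˢ D₂).val.map fun p => p.1 - p.2

variable {ι : Type*} [Fintype ι] [DecidableEq ι]

/-- The multiset of all internal differences of a family of sets. -/
def famInt (D : ι → Finset G) : Multiset G := ∑ i, intDiff (D i)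

/-- The multiset of all external differences between distinct members of a family of sets. -/
def famExt (D : ι → Finset G) : Multiset G :=
  ∑ i, ∑ j, if j = i then 0 else extDiff (D i) (D j)

/-- The union of the members of a family of sets. -/
def famU (D : ι → Finset G) : Finset G := Finset.univ.biUnion D

variable [Fintype G]

/-- `D` is an `(n,k,λ)`-difference set: `Δ(D) = λ(G*)`. -/
def IsDS (n k : ℕ) (lam : ℤ) (D : Finset G) : Prop :=
  Fintype.card G = n ∧ D.card = k ∧
    ∀ x : G, ((intDiff D).count x : ℤ) = if x = 0 then 0 else lam

/-- `P` is an `(n,k,λ,μ)`-partial difference set: `Δ(P) = λ(P) + μ(G* \ P)`. -/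
def IsPDS (n k : ℕ) (lam mu : ℤ) (P : Finset G) : Prop :=
  Fintype.card G = n ∧ P.card = k ∧
    ∀ x : G, ((intDiff P).count x : ℤ) =
      if x ∈ P then lam else if x = 0 then 0 else mu

/-- `D` is a family of `m` pairwise disjoint `k`-subsets of a group of order `n`. -/
def FamShape (n m k : ℕ) (D : ι → Finset G) : Prop :=
  Fintype.card G = n ∧ Fintype.card ι = m ∧ (∀ i, (D i).card = k) ∧
    ∀ i j, i ≠ j → Disjoint (D i) (D j)

/-- `(n,m,k,λ)`-disjoint difference family: `⋃ᵢ Δ(Dᵢ) = λ(G*)`. -/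
def IsDDF (n m k : ℕ) (lam : ℤ) (D : ι → Finset G) : Prop :=
  FamShape n m k D ∧
    ∀ x : G, ((famInt D).count x : ℤ) = if x = 0 then 0 else lam

/-- `(n,m,k,λ)`-external difference family: `⋃_{i≠j} Δ(Dᵢ,Dⱼ) = λ(G*)`. -/
def IsEDF (n m k : ℕ) (lam : ℤ) (D : ι → Finset G) : Prop :=
  FamShape n m k D ∧
    ∀ x : G, ((famExt D).count x : ℤ) = if x = 0 then 0 else lam

/-- `(n,m,k,λ,μ)`-disjoint partial difference family:
sets in `G*`, `⋃ᵢ Δ(Dᵢ) = λ(S) + μ(G* \ S)` where `S = ⋃ᵢ Dᵢ`. -/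
def IsDPDF (n m k : ℕ) (lam mu : ℤ) (D : ι → Finset G) : Prop :=
  FamShape n m k D ∧ (∀ i, (0 : G) ∉ D i) ∧
    ∀ x : G, ((famInt D).count x : ℤ) =
      if x ∈ famU D then lam else if x = 0 then 0 else mu

/-- `(n,m,k,λ,μ)`-external partial difference family:
sets in `G*`, `⋃_{i≠j} Δ(Dᵢ,Dⱼ) = λ(S) + μ(G* \ S)` where `S = ⋃ᵢ Dᵢ`. -/
def IsEPDF (n m k : ℕ) (lam mu : ℤ) (D : ι → Finset G) : Prop :=
  FamShape n m k D ∧ (∀ i, (0 : G) ∉ D i) ∧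
    ∀ x : G, ((famExt D).count x : ℤ) =
      if x ∈ famU D then lam else if x = 0 then 0 else mu

end Defs

section FieldDefs

variable {F : Type*} [Field F] [DecidableEq F]

/-- `α` is a primitive element: every nonzero element is a power of `α`. -/
def IsPrimitiveElt (α : F) : Prop := ∀ x : F, x ≠ 0 → ∃ k : ℕ, x = α ^ k

/-- The coset `α^i⟨α^e⟩` of the cyclotomic class of order `e` (of size `f`). -/
def cyclo (α : F) (e f i : ℕ) : Finset F :=
  (Finset.range f).image fun j => α ^ (i + e * j)

/-- The cyclotomic number `(i,j)_e`: the number of pairs `(zᵢ, zⱼ) ∈ Cᵢ × Cⱼ` with `zᵢ + 1 = zⱼ`. -/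
def cycNum (α : F) (e f i j : ℕ) : ℕ :=
  ((cyclo α e f i ×ˢ cyclo α e f j).filter fun p => p.1 + 1 = p.2).card

/-- `Φᵢ = {x ∈ C₀^e : x ≠ 1, x - 1 ∈ α^i C₀^ε}`. -/
def Phi (α : F) (e f ε ρ i : ℕ) : Finset F :=
  (cyclo α e f 0).filter fun x => x ≠ 1 ∧ x - 1 ∈ cyclo α ε ρ i

/-- `φᵢ = |Φᵢ|`. -/
def phi (α : F) (e f ε ρ i : ℕ) : ℕ := (Phi α e f ε ρ i).card

end FieldDefs

section Aux
set_option linter.unusedSectionVars false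

variable {F : Type*} [Field F] [Fintype F] [DecidableEq F] {q e f : ℕ} {α : F}

lemma aux_alpha_ne_zero (hα : IsPrimitiveElt α) (hq : Fintype.card F = q)
    (hef : q = e * f + 1) (he : 3 ≤ e) (hf : 1 < f) : α ≠ 0 := by
  intro h0
  have hcard : 2 < Fintype.card F := by
    rw [hq, hef]; nlinarith
  have h01 : ({0, 1} : Finset F).card ≤ 2 :=
    (Finset.card_insert_le _ _).trans (by simp)
  have hne : (Finset.univ \ ({0, 1} : Finset F)).Nonempty := by
    rw [← Finset.card_pos, Finset.card_sdiff_of_subset (Finset.subset_univ _), Finset.card_univ]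
    omega
  obtain ⟨x, hx⟩ := hne
  rw [Finset.mem_sdiff, Finset.mem_insert, Finset.mem_singleton] at hx
  push_neg at hx
  obtain ⟨k, hk⟩ := hα x hx.2.1
  rcases k with _ | k
  · exact hx.2.2 (by simpa using hk)
  · exact hx.2.1 (by rw [hk, h0, zero_pow (Nat.succ_ne_zero k)])

lemma aux_orderOf (hα : IsPrimitiveElt α) (hq : Fintype.card F = q)
    (hef : q = e * f + 1) (he : 3 ≤ e) (hf : 1 < f) : orderOf α = e * f := by
  have hne := aux_alpha_ne_zero hα hq hef he hf
  have hef0 : 0 < e * f := by positivity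
  have hq1 : Fintype.card F - 1 = e * f := by omega
  have hpow1 : α ^ (e * f) = 1 := by
    rw [← hq1]; exact FiniteField.pow_card_sub_one_eq_one α hne
  have hfin : IsOfFinOrder α :=
    isOfFinOrder_iff_pow_eq_one.mpr ⟨e * f, hef0, hpow1⟩
  have hdvd : orderOf α ∣ e * f := orderOf_dvd_of_pow_eq_one hpow1
  have hle : e * f ≤ orderOf α := by
    have hsub : (Finset.univ.erase (0 : F)) ⊆
        (Finset.range (orderOf α)).image (α ^ ·) := by
      intro x hx
      obtain ⟨k, hk⟩ := hα x (Finset.ne_of_mem_erase hx)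
      exact Finset.mem_image.mpr ⟨k % orderOf α,
        Finset.mem_range.mpr (Nat.mod_lt _ (orderOf_pos_iff.mpr hfin)),
        by rw [pow_mod_orderOf]; exact hk.symm⟩
    calc e * f = (Finset.univ.erase (0 : F)).card := by
          rw [Finset.card_erase_of_mem (Finset.mem_univ _), Finset.card_univ, hq]; omega
      _ ≤ ((Finset.range (orderOf α)).image (α ^ ·)).card := Finset.card_le_card hsub
      _ ≤ (Finset.range (orderOf α)).card := Finset.card_image_le
      _ = orderOf α := Finset.card_range _
  exact le_antisymm (Nat.le_of_dvd hef0 hdvd) hle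

/-- key power-equality criterion -/
lemma aux_pow_iff (hne : α ≠ 0) (ho : orderOf α = e * f) (a b : ℕ) :
    α ^ a = α ^ b ↔ a ≡ b [MOD e * f] := by
  set αu : Fˣ := Units.mk0 α hne with hαu
  have hval : ∀ n : ℕ, ((αu ^ n : Fˣ) : F) = α ^ n := fun n => by
    rw [Units.val_pow_eq_pow_val]; rfl
  have hou : orderOf αu = e * f := by rw [← orderOf_units (y := αu)]; exact ho
  constructor
  · intro h
    have : αu ^ a = αu ^ b := Units.ext (by rw [hval, hval]; exact h)
    rw [pow_eq_pow_iff_modEq, hou] at this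
    exact this
  · intro h
    have : αu ^ a = αu ^ b := by rw [pow_eq_pow_iff_modEq, hou]; exact h
    rw [← hval, ← hval, this]

lemma aux_mem_cyclo (hp : ∀ a b : ℕ, α ^ a = α ^ b ↔ a ≡ b [MOD e * f])
    (he : 0 < e) (hf : 0 < f) {x : F} {i : ℕ} :
    x ∈ cyclo α e f i ↔ ∃ k, x = α ^ k ∧ k % e = i % e := by
  have hef0 : 0 < e * f := by positivity
  constructor
  · intro hx
    obtain ⟨j, hj, hxj⟩ := Finset.mem_image.mp hx
    exact ⟨i + e * j, hxj.symm, Nat.add_mul_mod_self_left i e j⟩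
  · rintro ⟨k, rfl, hk⟩
    set k0 := k % (e * f) with hk0
    have hk0e : k0 % e = i % e := by
      rw [hk0, Nat.mod_mod_of_dvd k ⟨f, rfl⟩]; exact hk
    set a := i / e % f with ha
    set j := (k0 / e + (f - a)) % f with hj
    have hjf : j < f := Nat.mod_lt _ hf
    refine Finset.mem_image.mpr ⟨j, Finset.mem_range.mpr hjf, ?_⟩
    rw [hp]
    -- i + e * j ≡ k [MOD e * f]
    · have haf : a < f := Nat.mod_lt _ hf
      have h1 : i / e + (f - a) ≡ 0 [MOD f] := by
        calc i / e + (f - a) ≡ a + (f - a) [MOD f] :=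
              Nat.ModEq.add_right _ (Nat.mod_modEq _ _).symm
          _ = f := Nat.add_sub_cancel' haf.le
          _ ≡ 0 [MOD f] := (Nat.modEq_zero_iff_dvd).mpr dvd_rfl
      have h2 : i / e + j ≡ k0 / e [MOD f] := by
        calc i / e + j ≡ i / e + (k0 / e + (f - a)) [MOD f] :=
              Nat.ModEq.add_left _ (Nat.mod_modEq _ _)
          _ = (i / e + (f - a)) + k0 / e := by ring
          _ ≡ 0 + k0 / e [MOD f] := Nat.ModEq.add_right _ h1
          _ = k0 / e := by ring
      have h3 : e * (i / e + j) ≡ e * (k0 / e) [MOD e * f] := Nat.ModEq.mul_left' _ h2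
      have h4 : i % e + e * (i / e + j) ≡ i % e + e * (k0 / e) [MOD e * f] :=
        Nat.ModEq.add_left _ h3
      have hi : i % e + e * (i / e + j) = i + e * j := by
        have := Nat.mod_add_div i e; nlinarith [Nat.mul_add e (i / e) j]
      have hk0' : i % e + e * (k0 / e) = k0 := by
        have := Nat.mod_add_div k0 e; omega
      have h5 : i + e * j ≡ k0 [MOD e * f] := by rwa [hi, hk0'] at h4
      exact h5.trans (Nat.mod_modEq k (e * f))

variable (hp : ∀ a b : ℕ, α ^ a = α ^ b ↔ a ≡ b [MOD e * f])
  (hne : α ≠ 0) (he0 : 0 < e) (hf0 : 0 < f)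

include hp he0 hf0

lemma aux_mem_cyclo_pow {k i : ℕ} :
    α ^ k ∈ cyclo α e f i ↔ k % e = i % e := by
  rw [aux_mem_cyclo hp he0 hf0]
  constructor
  · rintro ⟨k', hk', hke⟩
    have : k ≡ k' [MOD e * f] := (hp k k').mp hk'
    have : k % e = k' % e := this.of_dvd ⟨f, rfl⟩
    omega
  · intro h; exact ⟨k, rfl, h⟩

lemma aux_cyclo_congr {i j : ℕ} (h : i % e = j % e) :
    cyclo α e f i = cyclo α e f j := by
  ext x
  rw [aux_mem_cyclo hp he0 hf0, aux_mem_cyclo hp he0 hf0]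
  simp_rw [h]

include hne in
lemma aux_zero_not_mem (i : ℕ) : (0 : F) ∉ cyclo α e f i := by
  rw [aux_mem_cyclo hp he0 hf0]
  rintro ⟨k, hk, -⟩
  exact pow_ne_zero k hne hk.symm

lemma aux_disjoint {i j : ℕ} (h : i % e ≠ j % e) :
    Disjoint (cyclo α e f i) (cyclo α e f j) := by
  rw [Finset.disjoint_left]
  intro x hxi hxj
  obtain ⟨k, rfl, hk⟩ := (aux_mem_cyclo hp he0 hf0).mp hxi
  have := (aux_mem_cyclo_pow hp he0 hf0).mp hxj
  omega

lemma aux_card_cyclo (i : ℕ) : (cyclo α e f i).card = f := by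
  rw [cyclo, Finset.card_image_of_injOn, Finset.card_range]
  intro j1 h1 j2 h2 hj
  simp only [Finset.coe_range, Set.mem_Iio] at h1 h2
  rw [hp] at hj
  have hj' : e * j1 ≡ e * j2 [MOD e * f] := (Nat.ModEq.add_left_cancel' i hj)
  have h3 : e * j1 % (e * f) = e * j2 % (e * f) := hj'
  rw [Nat.mod_eq_of_lt ((Nat.mul_lt_mul_left he0).mpr h1),
    Nat.mod_eq_of_lt ((Nat.mul_lt_mul_left he0).mpr h2)] at h3
  exact Nat.eq_of_mul_eq_mul_left he0 h3

lemma aux_mem_mul {x y : F} {a b : ℕ} (hx : x ∈ cyclo α e f a)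
    (hy : y ∈ cyclo α e f b) : x * y ∈ cyclo α e f (a + b) := by
  obtain ⟨k, rfl, hk⟩ := (aux_mem_cyclo hp he0 hf0).mp hx
  obtain ⟨l, rfl, hl⟩ := (aux_mem_cyclo hp he0 hf0).mp hy
  rw [← pow_add]
  rw [aux_mem_cyclo_pow hp he0 hf0]
  exact Nat.ModEq.add hk hl

lemma aux_mem_inv {x : F} {a : ℕ} (hx : x ∈ cyclo α e f a) :
    x⁻¹ ∈ cyclo α e f (a * (e * f - 1)) := by
  have hef0 : 0 < e * f := by positivity
  obtain ⟨k, rfl, hk⟩ := (aux_mem_cyclo hp he0 hf0).mp hx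
  have hinv : (α ^ k)⁻¹ = α ^ (k * (e * f - 1)) := by
    refine inv_eq_of_mul_eq_one_right ?_
    rw [← pow_add]
    have h1 : k + k * (e * f - 1) = k * (e * f) := by
      have : e * f - 1 + 1 = e * f := Nat.succ_pred_eq_of_pos hef0
      calc k + k * (e * f - 1) = k * (e * f - 1 + 1) := by ring
        _ = k * (e * f) := by rw [this]
    rw [h1, show (1 : F) = α ^ 0 from (pow_zero α).symm, hp]
    exact (Nat.modEq_zero_iff_dvd).mpr ⟨k, mul_comm _ _⟩
  rw [hinv, aux_mem_cyclo_pow hp he0 hf0]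
  exact Nat.ModEq.mul_right _ hk

lemma aux_count_ext (s t k : ℕ) :
    (extDiff (cyclo α e f s) (cyclo α e f t)).count (α ^ k)
      = cycNum α e f (t + (e * f - k % (e * f))) (s + (e * f - k % (e * f))) := by
  have hef0 : 0 < e * f := by positivity
  set m := e * f - k % (e * f) with hm
  have hmod : k % (e * f) < e * f := Nat.mod_lt _ hef0
  have hdvd : (e * f) ∣ (k + m) := by
    refine ⟨k / (e * f) + 1, ?_⟩
    have h1 := Nat.div_add_mod k (e * f)
    rw [Nat.mul_add, Nat.mul_one]
    omega
  have hxm : α ^ k * α ^ m = 1 := by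
    rw [← pow_add, show (1 : F) = α ^ 0 from (pow_zero α).symm, hp]
    exact (Nat.modEq_zero_iff_dvd).mpr hdvd
  have hmk : (m + k) ≡ 0 [MOD e] := by
    rw [Nat.add_comm]
    exact (Nat.modEq_zero_iff_dvd).mpr (dvd_trans ⟨f, rfl⟩ hdvd)
  have hcount : (extDiff (cyclo α e f s) (cyclo α e f t)).count (α ^ k)
      = ((cyclo α e f s ×ˢ cyclo α e f t).filter fun p => α ^ k = p.1 - p.2).card := by
    rw [extDiff, Multiset.count_map]; rfl
  rw [hcount, cycNum]
  refine Finset.card_bij' (fun p _ => (p.2 * α ^ m, p.1 * α ^ m))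
    (fun p _ => (p.2 * α ^ k, p.1 * α ^ k)) ?_ ?_ ?_ ?_
  · rintro ⟨a, b⟩ hab
    rw [Finset.mem_filter, Finset.mem_product] at hab ⊢
    obtain ⟨⟨ha, hb⟩, hx⟩ := hab
    have hαm : α ^ m ∈ cyclo α e f m :=
      (aux_mem_cyclo_pow hp he0 hf0).mpr rfl
    refine ⟨⟨aux_mem_mul hp he0 hf0 hb hαm, aux_mem_mul hp he0 hf0 ha hαm⟩, ?_⟩
    simp only
    have : (a - b) * α ^ m = 1 := by rw [← hx]; exact hxm
    linear_combination -this
  · rintro ⟨c, d⟩ hcd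
    rw [Finset.mem_filter, Finset.mem_product] at hcd ⊢
    obtain ⟨⟨hc, hd⟩, hx⟩ := hcd
    have hαk : α ^ k ∈ cyclo α e f k := (aux_mem_cyclo_pow hp he0 hf0).mpr rfl
    have h1 : d * α ^ k ∈ cyclo α e f (s + m + k) := aux_mem_mul hp he0 hf0 hd hαk
    have h2 : c * α ^ k ∈ cyclo α e f (t + m + k) := aux_mem_mul hp he0 hf0 hc hαk
    have hsc : ∀ w : ℕ, cyclo α e f (w + m + k) = cyclo α e f w := by
      intro w
      refine aux_cyclo_congr hp he0 hf0 ?_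
      have : w + m + k ≡ w + 0 [MOD e] := by
        calc w + m + k = w + (m + k) := by ring
          _ ≡ w + 0 [MOD e] := Nat.ModEq.add_left _ hmk
      exact this
    rw [hsc s] at h1
    rw [hsc t] at h2
    refine ⟨⟨h1, h2⟩, ?_⟩
    simp only at hx ⊢
    have : d - c = 1 := by linear_combination hx.symm
    calc α ^ k = (d - c) * α ^ k := by rw [this, one_mul]
      _ = d * α ^ k - c * α ^ k := by ring
  · rintro ⟨a, b⟩ hab
    have h1 : α ^ m * α ^ k = 1 := by rw [mul_comm]; exact hxm
    simp only [Prod.mk.injEq]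
    constructor <;> · rw [mul_assoc, h1, mul_one]
  · rintro ⟨c, d⟩ hcd
    simp only [Prod.mk.injEq]
    constructor <;> · rw [mul_assoc, hxm, mul_one]

lemma aux_cycNum_congr {i i' j j' : ℕ} (hi : i % e = i' % e) (hj : j % e = j' % e) :
    cycNum α e f i j = cycNum α e f i' j' := by
  rw [cycNum, cycNum, aux_cyclo_congr hp he0 hf0 hi, aux_cyclo_congr hp he0 hf0 hj]

include hne in
lemma aux_cycNum_shift (hef2 : 2 ≤ e * f) (i j : ℕ) :
    cycNum α e f i j = cycNum α e f (i * (e * f - 1)) (j + i * (e * f - 1)) := by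
  have hef0 : 0 < e * f := by positivity
  set c := e * f - 1 with hc
  have hc1 : c + 1 = e * f := Nat.succ_pred_eq_of_pos hef0
  rw [cycNum, cycNum]
  refine Finset.card_bij' (fun p _ => (p.1⁻¹, p.2 * p.1⁻¹))
    (fun p _ => (p.1⁻¹, p.2 * p.1⁻¹)) ?_ ?_ ?_ ?_
  · rintro ⟨z, w⟩ hzw
    rw [Finset.mem_filter, Finset.mem_product] at hzw ⊢
    obtain ⟨⟨hz, hw⟩, hx⟩ := hzw
    have hz0 : z ≠ 0 := fun h => aux_zero_not_mem hp hne he0 hf0 i (h ▸ hz)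
    refine ⟨⟨aux_mem_inv hp he0 hf0 hz, aux_mem_mul hp he0 hf0 hw
      (aux_mem_inv hp he0 hf0 hz)⟩, ?_⟩
    simp only at hx ⊢
    field_simp
    linear_combination hx
  · rintro ⟨z, w⟩ hzw
    rw [Finset.mem_filter, Finset.mem_product] at hzw ⊢
    obtain ⟨⟨hz, hw⟩, hx⟩ := hzw
    have hz0 : z ≠ 0 := fun h => aux_zero_not_mem hp hne he0 hf0 _ (h ▸ hz)
    have h1 : z⁻¹ ∈ cyclo α e f (i * c * c) := aux_mem_inv hp he0 hf0 hz
    have h2 : w * z⁻¹ ∈ cyclo α e f (j + i * c + i * c * c) :=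
      aux_mem_mul hp he0 hf0 hw h1
    have e1 : cyclo α e f (i * c * c) = cyclo α e f i := by
      refine aux_cyclo_congr hp he0 hf0 ?_
      obtain ⟨d, hd⟩ : ∃ d, c = d + 1 := ⟨c - 1, by omega⟩
      have hcc : i * c * c = i + e * (f * (d * i)) := by
        have h4 : d + 2 = e * f := by omega
        calc i * c * c = i * ((d + 2) * d + 1) := by rw [hd]; ring
          _ = i * ((e * f) * d + 1) := by rw [h4]
          _ = i + e * (f * (d * i)) := by ring
      rw [hcc, Nat.add_mul_mod_self_left]
    have e2 : cyclo α e f (j + i * c + i * c * c) = cyclo α e f j := by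
      refine aux_cyclo_congr hp he0 hf0 ?_
      have h3 : j + i * c + i * c * c = j + e * (f * (i * c)) := by
        calc j + i * c + i * c * c = j + i * c * (c + 1) := by ring
          _ = j + i * c * (e * f) := by rw [hc1]
          _ = j + e * (f * (i * c)) := by ring
      rw [h3, Nat.add_mul_mod_self_left]
    rw [e1] at h1
    rw [e2] at h2
    refine ⟨⟨h1, h2⟩, ?_⟩
    simp only at hx ⊢
    field_simp
    linear_combination hx
  · rintro ⟨z, w⟩ hzw
    rw [Finset.mem_filter, Finset.mem_product] at hzw
    have hz0 : z ≠ 0 := fun h => aux_zero_not_mem hp hne he0 hf0 i (h ▸ hzw.1.1)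
    simp only [Prod.mk.injEq, inv_inv]
    exact ⟨trivial, by field_simp⟩
  · rintro ⟨z, w⟩ hzw
    rw [Finset.mem_filter, Finset.mem_product] at hzw
    have hz0 : z ≠ 0 := fun h => aux_zero_not_mem hp hne he0 hf0 _ (h ▸ hzw.1.1)
    simp only [Prod.mk.injEq, inv_inv]
    exact ⟨trivial, by field_simp⟩

include hne in
lemma aux_part_i (hα : IsPrimitiveElt α) (he3 : 3 ≤ e) (hf1 : 1 < f) (B X : ℕ)
    (hB0 : ∀ i, 1 ≤ i → i ≤ e - 1 → cycNum α e f 0 i = B)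
    (hBi : ∀ i, 1 ≤ i → i ≤ e - 1 → cycNum α e f i i = B)
    (hX : ∀ i j, 1 ≤ i → i ≤ e - 1 → 1 ≤ j → j ≤ e - 1 → i ≠ j → cycNum α e f i j = X)
    (s t : ℕ) (hst : s % e ≠ t % e) (x : F) :
    (extDiff (cyclo α e f s) (cyclo α e f t)).count x =
      if x ∈ cyclo α e f s ∪ cyclo α e f t then B else if x = 0 then 0 else X := by
  have hef0 : 0 < e * f := by positivity
  have hef2 : 2 ≤ e * f := by nlinarith
  by_cases hx0 : x = 0
  · subst hx0
    rw [if_neg, if_pos rfl]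
    · rw [Multiset.count_eq_zero]
      intro hmem
      rw [extDiff, Multiset.mem_map] at hmem
      obtain ⟨p, hpmem, hpval⟩ := hmem
      have hpm : p ∈ cyclo α e f s ×ˢ cyclo α e f t := hpmem
      rw [Finset.mem_product] at hpm
      have hpp : p.1 = p.2 := sub_eq_zero.mp hpval
      exact (Finset.disjoint_left.mp (aux_disjoint hp he0 hf0 hst) hpm.1) (hpp ▸ hpm.2)
    · rw [Finset.mem_union]
      push_neg
      exact ⟨aux_zero_not_mem hp hne he0 hf0 s, aux_zero_not_mem hp hne he0 hf0 t⟩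
  · obtain ⟨k, rfl⟩ := hα x hx0
    rw [aux_count_ext hp he0 hf0 s t k]
    set m := e * f - k % (e * f) with hm
    have hmod : k % (e * f) < e * f := Nat.mod_lt _ hef0
    have hmk' : m + k ≡ 0 [MOD e] := by
      calc m + k ≡ m + k % (e * f) [MOD e] :=
            Nat.ModEq.add_left m (((Nat.mod_modEq k (e * f)).of_dvd ⟨f, rfl⟩).symm)
        _ = e * f := by rw [hm]; exact Nat.sub_add_cancel hmod.le
        _ ≡ 0 [MOD e] := (Nat.modEq_zero_iff_dvd).mpr ⟨f, rfl⟩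
    have key : ∀ w : ℕ, (w + m) % e = 0 ↔ k % e = w % e := by
      intro w
      constructor
      · intro h
        have h1 : w + m ≡ 0 [MOD e] := by
          show (w + m) % e = 0 % e; rw [Nat.zero_mod]; exact h
        have h2 : w + (m + k) ≡ 0 + k [MOD e] := by
          calc w + (m + k) = (w + m) + k := by ring
            _ ≡ 0 + k [MOD e] := Nat.ModEq.add_right k h1
        have h3 : w + (m + k) ≡ w + 0 [MOD e] := Nat.ModEq.add_left w hmk'
        have h4 : w + 0 ≡ 0 + k [MOD e] := h3.symm.trans h2
        have h5 : (w + 0) % e = (0 + k) % e := h4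
        rw [Nat.add_zero] at h5; rw [Nat.zero_add] at h5; exact h5.symm
      · intro h
        have h1 : w + m ≡ k + m [MOD e] :=
          Nat.ModEq.add_right m (show w % e = k % e from h.symm)
        have h2 : w + m ≡ 0 [MOD e] := h1.trans (by rw [Nat.add_comm]; exact hmk')
        have h3 : (w + m) % e = 0 % e := h2
        rwa [Nat.zero_mod] at h3
    set a := (t + m) % e with ha
    set b := (s + m) % e with hb
    have hae : a < e := Nat.mod_lt _ he0
    have hbe : b < e := Nat.mod_lt _ he0
    have habne : a ≠ b := by
      intro h
      apply hst
      have h1 : (s + m) % e = (t + m) % e := by rw [← ha, ← hb, h]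
      exact (Nat.ModEq.add_right_cancel' m
        (show (s + m) % e = (t + m) % e from h1))
    set c := e * f - 1 with hc
    have hc1 : c + 1 = e * f := Nat.succ_pred_eq_of_pos hef0
    have hshift : ∀ w : ℕ, w ≠ 0 → w < e → cycNum α e f w 0 = B := by
      intro w hw0 hwe
      rw [aux_cycNum_shift hp hne he0 hf0 hef2 w 0]
      set b2 := (w * c) % e with hb2
      have hb2e : b2 < e := Nat.mod_lt _ he0
      have hsum : (w * c + w) % e = 0 := by
        have hh : w * c + w = e * (f * w) := by
          calc w * c + w = w * (c + 1) := by ring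
            _ = w * (e * f) := by rw [hc1]
            _ = e * (f * w) := by ring
        rw [hh]; exact Nat.mul_mod_right e _
      have hb2ne : b2 ≠ 0 := by
        intro h0
        have h1 : (w * c + w) % e = ((w * c) % e + w % e) % e := Nat.add_mod _ _ _
        rw [← hb2, h0, Nat.zero_add, Nat.mod_mod_of_dvd w dvd_rfl] at h1
        rw [h1] at hsum
        rw [Nat.mod_eq_of_lt hwe] at hsum
        exact hw0 hsum
      have hcong2 : cycNum α e f (w * c) (0 + w * c) = cycNum α e f b2 b2 := by
        refine aux_cycNum_congr hp he0 hf0 ?_ ?_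
        · rw [Nat.mod_eq_of_lt hb2e]
        · rw [Nat.zero_add, Nat.mod_eq_of_lt hb2e]
      rw [hcong2]
      exact hBi b2 (by omega) (by omega)
    by_cases hs : k % e = s % e
    · rw [if_pos (Finset.mem_union_left _ ((aux_mem_cyclo_pow hp he0 hf0).mpr hs))]
      have hb0 : b = 0 := by rw [hb]; exact (key s).mpr hs
      have ha0 : a ≠ 0 := by
        intro h0
        have := (key t).mp (by rw [← ha]; exact h0)
        exact hst (hs ▸ this)
      have hcong : cycNum α e f (t + m) (s + m) = cycNum α e f a 0 := by
        refine aux_cycNum_congr hp he0 hf0 ?_ ?_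
        · rw [Nat.mod_eq_of_lt hae]
        · rw [Nat.zero_mod]; rw [← hb]; exact hb0
      rw [hcong]
      exact hshift a ha0 hae
    · by_cases ht : k % e = t % e
      · rw [if_pos (Finset.mem_union_right _ ((aux_mem_cyclo_pow hp he0 hf0).mpr ht))]
        have ha0 : a = 0 := by rw [ha]; exact (key t).mpr ht
        have hb0 : b ≠ 0 := by
          intro h0
          have := (key s).mp (by rw [← hb]; exact h0)
          exact hst (this ▸ ht)
        have hcong : cycNum α e f (t + m) (s + m) = cycNum α e f 0 b := by
          refine aux_cycNum_congr hp he0 hf0 ?_ ?_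
          · rw [Nat.zero_mod]; rw [← ha]; exact ha0
          · rw [Nat.mod_eq_of_lt hbe]
        rw [hcong]
        exact hB0 b (by omega) (by omega)
      · rw [if_neg, if_neg (pow_ne_zero k hne)]
        · have ha0 : a ≠ 0 := by
            intro h0
            exact ht ((key t).mp (by rw [← ha]; exact h0))
          have hb0 : b ≠ 0 := by
            intro h0
            exact hs ((key s).mp (by rw [← hb]; exact h0))
          have hcong : cycNum α e f (t + m) (s + m) = cycNum α e f a b := by
            refine aux_cycNum_congr hp he0 hf0 ?_ ?_
            · rw [Nat.mod_eq_of_lt hae]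
            · rw [Nat.mod_eq_of_lt hbe]
          rw [hcong]
          exact hX a b (by omega) (by omega) (by omega) (by omega) habne
        · rw [Finset.mem_union]
          push_neg
          constructor
          · rw [aux_mem_cyclo_pow hp he0 hf0]; exact hs
          · rw [aux_mem_cyclo_pow hp he0 hf0]; exact ht

end Aux

/-- Proposition: suppose the cyclotomic numbers satisfy `B = (0,i)_e = (i,i)_e` for
`1 ≤ i ≤ e-1` and `X = (i,j)_e` for `1 ≤ i ≠ j ≤ e-1`.  Then
(i) `Δ(C_s^e, C_t^e) = B(C_s^e ∪ C_t^e) + X(G* \ (C_s^e ∪ C_t^e))` for all `s ≠ t`, and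
(ii) any family of `u` distinct classes (`2 ≤ u ≤ e-1`) is a
`(q,u,f,2B(u-1)+X(u-1)(u-2),Xu(u-1))`-EPDF, proper when `B ≠ X`. -/
theorem cyclotomic_classes_epdf {F : Type*} [Field F] [Fintype F] [DecidableEq F]
    (q e f u B X : ℕ) (α : F) (I : Finset ℕ)
    (hq : Fintype.card F = q) (hα : IsPrimitiveElt α)
    (hef : q = e * f + 1) (he : 3 ≤ e) (hf : 1 < f)
    (hI : I ⊆ Finset.range e) (hIcard : I.card = u) (hu2 : 2 ≤ u) (hue : u ≤ e - 1)
    (hB0 : ∀ i, 1 ≤ i → i ≤ e - 1 → cycNum α e f 0 i = B)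
    (hBi : ∀ i, 1 ≤ i → i ≤ e - 1 → cycNum α e f i i = B)
    (hX : ∀ i j, 1 ≤ i → i ≤ e - 1 → 1 ≤ j → j ≤ e - 1 → i ≠ j → cycNum α e f i j = X) :
    (∀ s t, s ≤ e - 1 → t ≤ e - 1 → s ≠ t →
      ∀ x : F, (extDiff (cyclo α e f s) (cyclo α e f t)).count x =
        if x ∈ cyclo α e f s ∪ cyclo α e f t then B else if x = 0 then 0 else X) ∧
    (IsEPDF q u f
        (2 * (B : ℤ) * ((u : ℤ) - 1) + (X : ℤ) * ((u : ℤ) - 1) * ((u : ℤ) - 2))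
        ((X : ℤ) * (u : ℤ) * ((u : ℤ) - 1))
        (fun i : ↥I => cyclo α e f (i : ℕ)) ∧
     (B ≠ X →
        2 * (B : ℤ) * ((u : ℤ) - 1) + (X : ℤ) * ((u : ℤ) - 1) * ((u : ℤ) - 2) ≠
          (X : ℤ) * (u : ℤ) * ((u : ℤ) - 1))) := by
  have he0 : 0 < e := by omega
  have hf0 : 0 < f := by omega
  have hne : α ≠ 0 := aux_alpha_ne_zero hα hq hef he hf
  have ho : orderOf α = e * f := aux_orderOf hα hq hef he hf
  have hp : ∀ a b : ℕ, α ^ a = α ^ b ↔ a ≡ b [MOD e * f] := fun a b =>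
    aux_pow_iff hne ho a b
  have hpartI := aux_part_i hp hne he0 hf0 hα he hf B X hB0 hBi hX
  refine ⟨?_, ?_, ?_⟩
  · intro s t hs ht hst x
    refine hpartI s t ?_ x
    rw [Nat.mod_eq_of_lt (by omega), Nat.mod_eq_of_lt (by omega)]
    exact hst
  · -- the EPDF property
    have hmodne : ∀ i j : ↥I, j ≠ i → (i : ℕ) % e ≠ (j : ℕ) % e := by
      intro i j hji
      have hi : (i : ℕ) < e := Finset.mem_range.mp (hI i.2)
      have hj : (j : ℕ) < e := Finset.mem_range.mp (hI j.2)
      rw [Nat.mod_eq_of_lt hi, Nat.mod_eq_of_lt hj]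
      exact fun h => hji (Subtype.ext h.symm)
    have hcN : ∀ x : F, (famExt (fun i : ↥I => cyclo α e f (i : ℕ))).count x =
        ∑ i : ↥I, ∑ j : ↥I, (if j = i then 0 else
          (extDiff (cyclo α e f (i : ℕ)) (cyclo α e f (j : ℕ))).count x) := by
      intro x
      rw [famExt, Multiset.count_sum']
      refine Finset.sum_congr rfl fun i _ => ?_
      rw [Multiset.count_sum']
      refine Finset.sum_congr rfl fun j _ => ?_
      split <;> simp
    have hcuniv : (Finset.univ : Finset ↥I).card = u := by
      rw [Finset.card_univ, Fintype.card_coe]; exact hIcard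
    have hmemU : ∀ y : F, y ∈ famU (fun i : ↥I => cyclo α e f (i : ℕ)) ↔
        ∃ i : ↥I, y ∈ cyclo α e f (i : ℕ) := by
      intro y; simp [famU]
    refine ⟨⟨hq, ?_, ?_, ?_⟩, ?_, ?_⟩
    · rw [Fintype.card_coe]; exact hIcard
    · intro i; exact aux_card_cyclo hp he0 hf0 _
    · intro i j hij
      exact aux_disjoint hp he0 hf0 (hmodne i j (fun h => hij h.symm))
    · intro i; exact aux_zero_not_mem hp hne he0 hf0 _
    · intro x
      by_cases hx0 : x = 0
      · subst hx0
        rw [if_neg, if_pos rfl]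
        · have h0 : (famExt (fun i : ↥I => cyclo α e f (i : ℕ))).count (0 : F) = 0 := by
            rw [hcN]
            refine Finset.sum_eq_zero fun i _ => Finset.sum_eq_zero fun j _ => ?_
            split
            · rfl
            · rename_i hji
              rw [hpartI _ _ (hmodne i j hji) 0, if_neg, if_pos rfl]
              rw [Finset.mem_union]
              push_neg
              exact ⟨aux_zero_not_mem hp hne he0 hf0 _, aux_zero_not_mem hp hne he0 hf0 _⟩
          rw [h0]; simp
        · rw [hmemU]
          push_neg
          exact fun i => aux_zero_not_mem hp hne he0 hf0 _
      · obtain ⟨k, rfl⟩ := hα x hx0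
        set r := k % e with hr
        have hrW : ∀ i : ↥I, (α ^ k ∈ cyclo α e f (i : ℕ)) ↔ r = (i : ℕ) := by
          intro i
          rw [aux_mem_cyclo_pow hp he0 hf0,
            Nat.mod_eq_of_lt (Finset.mem_range.mp (hI i.2))]
        have hmU : (α ^ k ∈ famU (fun i : ↥I => cyclo α e f (i : ℕ))) ↔ r ∈ I := by
          rw [hmemU]
          constructor
          · rintro ⟨i, hi⟩
            rw [hrW i] at hi
            rw [hi]; exact i.2
          · intro hrI
            exact ⟨⟨r, hrI⟩, (hrW ⟨r, hrI⟩).mpr rfl⟩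
        by_cases hrI : r ∈ I
        · rw [if_pos (hmU.mpr hrI)]
          set r' : ↥I := ⟨r, hrI⟩ with hr'
          have hgB : ∀ i j : ↥I, j ≠ i →
              (extDiff (cyclo α e f (i : ℕ)) (cyclo α e f (j : ℕ))).count (α ^ k) =
                if i = r' ∨ j = r' then B else X := by
            intro i j hji
            rw [hpartI _ _ (hmodne i j hji) (α ^ k)]
            by_cases hin : α ^ k ∈ cyclo α e f (i : ℕ) ∪ cyclo α e f (j : ℕ)
            · rw [if_pos hin, if_pos]
              rcases Finset.mem_union.mp hin with h | h
              · exact Or.inl (Subtype.ext ((hrW i).mp h).symm)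
              · exact Or.inr (Subtype.ext ((hrW j).mp h).symm)
            · rw [if_neg hin, if_neg (pow_ne_zero k hne), if_neg]
              rintro (h | h)
              · exact hin (Finset.mem_union_left _ ((hrW i).mpr (by rw [h]) ))
              · exact hin (Finset.mem_union_right _ ((hrW j).mpr (by rw [h])))
          have hsum : (famExt (fun i : ↥I => cyclo α e f (i : ℕ))).count (α ^ k) =
              (u - 1) * B + (u - 1) * (B + (u - 2) * X) := by
            rw [hcN]
            have hstep : ∀ i j : ↥I, (if j = i then 0 else
                (extDiff (cyclo α e f (i : ℕ)) (cyclo α e f (j : ℕ))).count (α ^ k)) =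
                (if j = i then 0 else if i = r' ∨ j = r' then B else X) := by
              intro i j
              by_cases h : j = i
              · simp [h]
              · rw [if_neg h, if_neg h, hgB i j h]
            rw [Finset.sum_congr rfl fun i _ => Finset.sum_congr rfl fun j _ => hstep i j]
            rw [← Finset.add_sum_erase _ _ (Finset.mem_univ r')]
            have hT1 : (∑ j : ↥I, if j = r' then 0 else if r' = r' ∨ j = r' then B else X)
                = (u - 1) * B := by
              have hfun : ∀ j : ↥I, (if j = r' then 0 else if r' = r' ∨ j = r' then B else X)
                  = (if j = r' then 0 else B) := by
                intro j; by_cases h : j = r' <;> simp [h]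
              rw [Finset.sum_congr rfl fun j _ => hfun j,
                ← Finset.add_sum_erase _ _ (Finset.mem_univ r'), if_pos rfl, Nat.zero_add]
              have hconst : ∀ j ∈ (Finset.univ : Finset ↥I).erase r',
                  (if j = r' then 0 else B) = B := by
                intro j hj
                rw [if_neg (Finset.mem_erase.mp hj).1]
              rw [Finset.sum_congr rfl hconst, Finset.sum_const, smul_eq_mul,
                Finset.card_erase_of_mem (Finset.mem_univ _), hcuniv]
            have hT2 : ∀ i ∈ (Finset.univ : Finset ↥I).erase r',
                (∑ j : ↥I, if j = i then 0 else if i = r' ∨ j = r' then B else X)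
                  = B + (u - 2) * X := by
              intro i hi
              have hir : i ≠ r' := (Finset.mem_erase.mp hi).1
              have hfun : ∀ j : ↥I, (if j = i then 0 else if i = r' ∨ j = r' then B else X)
                  = (if j = i then 0 else if j = r' then B else X) := by
                intro j
                by_cases h1 : j = i <;> by_cases h2 : j = r' <;> simp [h1, h2, hir]
              rw [Finset.sum_congr rfl fun j _ => hfun j,
                ← Finset.add_sum_erase _ _ (Finset.mem_univ i), if_pos rfl, Nat.zero_add]
              have hr'mem : r' ∈ (Finset.univ : Finset ↥I).erase i :=
                Finset.mem_erase.mpr ⟨fun h => hir h.symm, Finset.mem_univ _⟩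
              rw [← Finset.add_sum_erase _ _ hr'mem, if_neg (fun h => hir h.symm), if_pos rfl]
              have hconst : ∀ j ∈ ((Finset.univ : Finset ↥I).erase i).erase r',
                  (if j = i then 0 else if j = r' then B else X) = X := by
                intro j hj
                have hj1 := Finset.mem_erase.mp hj
                have hj2 := Finset.mem_erase.mp hj1.2
                rw [if_neg hj2.1, if_neg hj1.1]
              rw [Finset.sum_congr rfl hconst, Finset.sum_const, smul_eq_mul,
                Finset.card_erase_of_mem hr'mem,
                Finset.card_erase_of_mem (Finset.mem_univ _), hcuniv,
                show u - 1 - 1 = u - 2 from by omega]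
            rw [hT1, Finset.sum_congr rfl hT2, Finset.sum_const, smul_eq_mul,
              Finset.card_erase_of_mem (Finset.mem_univ _), hcuniv]
          rw [hsum]
          have hu1 : 1 ≤ u := by omega
          push_cast [Nat.cast_sub hu1, Nat.cast_sub hu2]
          ring
        · rw [if_neg (fun h => hrI (hmU.mp h)), if_neg (pow_ne_zero k hne)]
          have hgX : ∀ i j : ↥I, j ≠ i →
              (extDiff (cyclo α e f (i : ℕ)) (cyclo α e f (j : ℕ))).count (α ^ k) = X := by
            intro i j hji
            rw [hpartI _ _ (hmodne i j hji) (α ^ k), if_neg, if_neg (pow_ne_zero k hne)]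
            rw [Finset.mem_union]
            push_neg
            constructor
            · rw [hrW i]; exact fun h => hrI (h ▸ i.2)
            · rw [hrW j]; exact fun h => hrI (h ▸ j.2)
          have hsum : (famExt (fun i : ↥I => cyclo α e f (i : ℕ))).count (α ^ k) =
              u * ((u - 1) * X) := by
            rw [hcN]
            have hstep : ∀ i j : ↥I, (if j = i then 0 else
                (extDiff (cyclo α e f (i : ℕ)) (cyclo α e f (j : ℕ))).count (α ^ k)) =
                (if j = i then 0 else X) := by
              intro i j
              by_cases h : j = i
              · simp [h]
              · rw [if_neg h, if_neg h, hgX i j h]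
            rw [Finset.sum_congr rfl fun i _ => Finset.sum_congr rfl fun j _ => hstep i j]
            have hinner : ∀ i : ↥I, (∑ j : ↥I, if j = i then 0 else X) = (u - 1) * X := by
              intro i
              rw [← Finset.add_sum_erase _ _ (Finset.mem_univ i), if_pos rfl, Nat.zero_add]
              have hconst : ∀ j ∈ (Finset.univ : Finset ↥I).erase i,
                  (if j = i then 0 else X) = X := by
                intro j hj
                rw [if_neg (Finset.mem_erase.mp hj).1]
              rw [Finset.sum_congr rfl hconst, Finset.sum_const, smul_eq_mul,
                Finset.card_erase_of_mem (Finset.mem_univ _), hcuniv]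
            rw [Finset.sum_congr rfl fun i _ => hinner i, Finset.sum_const, smul_eq_mul,
              hcuniv]
          rw [hsum]
          have hu1 : 1 ≤ u := by omega
          push_cast [Nat.cast_sub hu1]
          ring
  · intro hBX heq
    have h1 : ((u : ℤ) - 1) * (2 * (B : ℤ) - 2 * (X : ℤ)) = 0 := by
      linear_combination heq
    rcases mul_eq_zero.mp h1 with h | h
    · have hu : (u : ℤ) = 1 := by linarith
      have : u = 1 := by exact_mod_cast hu
      omega
    · have hbx : (B : ℤ) = (X : ℤ) := by linarith
      exact hBX (by exact_mod_cast hbx)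
end

section
/- Let q′ = pⁿ where p is prime, and let e ≥ 3 be a divisor of q′ − 1. Then the following two conditions are equivalent: (i) −1 is congruent to a power of p modulo e (i.e. there exists s ≥ 1 with p^s ≡ −1 (mod e)); (ii) there exists a prime power q such that q′ = q^{2b} for some positive integer b and e divides q + 1. -/
open Finset

/-- Lemma: for `q′ = pⁿ` (`p` prime) and `e ≥ 3` dividing `q′ - 1`, the following are
equivalent: (i) some power of `p` is congruent to `-1` modulo `e`; (ii) there is a prime power
`q` with `q′ = q^(2b)` for some `b ≥ 1` and `e ∣ q + 1`. -/
theorem neg_one_power_iff_square_form (p n e : ℕ)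
    (hp : p.Prime) (hn : 0 < n) (he : 3 ≤ e) (hdvd : e ∣ p ^ n - 1) :
    (∃ s : ℕ, 1 ≤ s ∧ e ∣ p ^ s + 1) ↔
    (∃ q b : ℕ, IsPrimePow q ∧ 0 < b ∧ p ^ n = q ^ (2 * b) ∧ e ∣ q + 1) := by
  have hpn1 : 1 ≤ p ^ n := Nat.one_le_pow _ _ hp.pos
  haveI : NeZero e := ⟨by omega⟩
  set x : ZMod e := (p : ZMod e) with hxdef
  have hx1 : x ^ n = 1 := by
    have h : ((p ^ n - 1 : ℕ) : ZMod e) = 0 := (ZMod.natCast_eq_zero_iff _ _).mpr hdvd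
    have h2 : ((p ^ n : ℕ) : ZMod e) = (((p ^ n - 1) + 1 : ℕ) : ZMod e) := by
      congr 1; omega
    push_cast at h2 h ⊢
    rw [h2, h, zero_add]
  have hne : (-1 : ZMod e) ≠ 1 := by
    intro h
    have h2 : ((2 : ℕ) : ZMod e) = 0 := by
      push_cast
      linear_combination -h
    have := (ZMod.natCast_eq_zero_iff 2 e).mp h2
    have := Nat.le_of_dvd (by norm_num) this
    omega
  constructor
  · rintro ⟨s, hs1, hs⟩
    have hxs : x ^ s = -1 := by
      have h : ((p ^ s + 1 : ℕ) : ZMod e) = 0 := (ZMod.natCast_eq_zero_iff _ _).mpr hs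
      push_cast at h
      linear_combination h
    set d := orderOf x with hd
    have hdn : d ∣ n := orderOf_dvd_of_pow_eq_one hx1
    have hfin : IsOfFinOrder x := isOfFinOrder_iff_pow_eq_one.mpr ⟨n, hn, hx1⟩
    have hdpos : 0 < d := hfin.orderOf_pos
    have hxd : x ^ d = 1 := pow_orderOf_eq_one x
    have hd2s : d ∣ 2 * s := orderOf_dvd_of_pow_eq_one (by
      rw [pow_mul']
      simp [hxs])
    have hds : ¬ d ∣ s := by
      intro h
      have h1 := orderOf_dvd_iff_pow_eq_one.mp h
      rw [h1] at hxs
      exact hne hxs.symm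
    have hdeven : 2 ∣ d := by
      rcases Nat.even_or_odd d with h | h
      · exact h.two_dvd
      · exact absurd ((Nat.Coprime.dvd_of_dvd_mul_left (h.coprime_two_right) hd2s)) hds
    obtain ⟨c, hc⟩ := hdeven
    have hcpos : 0 < c := by omega
    have hcs : c ∣ s := (mul_dvd_mul_iff_left (two_ne_zero)).mp (hc ▸ hd2s)
    obtain ⟨m, hm⟩ := hcs
    have hmodd : Odd m := by
      rcases Nat.even_or_odd m with hme | hmo
      · exfalso
        obtain ⟨m', hm'⟩ := hme
        exact hds ⟨m', by rw [hm, hm', hc]; ring⟩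
      · exact hmo
    have hxc : x ^ c = -1 := by
      obtain ⟨k, hk⟩ := hmodd
      have h2c : (x ^ c) ^ 2 = 1 := by rw [← pow_mul, Nat.mul_comm, ← hc, hxd]
      calc x ^ c = ((x ^ c) ^ 2) ^ k * x ^ c := by rw [h2c]; ring
        _ = x ^ (c * m) := by rw [← pow_mul, ← pow_mul, ← pow_add]; congr 1; rw [hk]; ring
        _ = -1 := by rw [← hm, hxs]
    obtain ⟨t, ht⟩ := hdn
    refine ⟨p ^ c, t, ⟨p, c, hp.prime, hcpos, rfl⟩, ?_, ?_, ?_⟩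
    · by_contra h
      have : t = 0 := by omega
      rw [this, Nat.mul_zero] at ht
      omega
    · rw [← pow_mul]
      congr 1
      rw [ht, hc]; ring
    · rw [← ZMod.natCast_eq_zero_iff]
      push_cast
      rw [hxc]
      ring
  · rintro ⟨q, b, ⟨ℓ, a, hℓ, ha, rfl⟩, hb, hqn, hq1⟩
    rw [← pow_mul] at hqn
    have hpl : p = ℓ := by
      have : p ∣ ℓ ^ (a * (2 * b)) := by
        rw [← hqn]
        exact dvd_pow_self p (by omega)
      exact (Nat.prime_dvd_prime_iff_eq hp hℓ.nat_prime).mp (hp.dvd_of_dvd_pow this)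
    exact ⟨a, ha, by rw [hpl]; exact hq1⟩
end

section
/- Let q = ef + 1 be a prime power with e, f > 1 and let C₀^e = ⟨α^e⟩ be the cyclotomic class of order e containing 1. Then C₀^e is a (q, f, f−1, 0)-partial difference set if and only if C₀^e ∪ {0} is a subfield of GF(q). In this case q = p^β is a prime power which is not prime, f = p^r − 1 for some proper divisor r of β, and e = (q−1)/(p^r − 1). -/
open Finset

/-- Proposition: `C₀^e` is a `(q,f,f-1,0)`-PDS iff `C₀^e ∪ {0}` is a subfield of `GF(q)`;
in this case `q = p^β` is not prime, `f = p^r - 1` for a proper divisor `r` of `β`, and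
`e(p^r - 1) = q - 1`. -/
theorem cyclo_pds_iff_subfield {F : Type*} [Field F] [Fintype F] [DecidableEq F]
    (q e f p beta : ℕ) (α : F)
    (hq : Fintype.card F = q) (hα : IsPrimitiveElt α)
    (hef : q = e * f + 1) (he : 1 < e) (hf : 1 < f)
    (hp : p.Prime) (hbeta : 0 < beta) (hpq : q = p ^ beta) :
    (IsPDS q f ((f : ℤ) - 1) 0 (cyclo α e f 0) ↔
      ∃ S : Subfield F, (S : Set F) = ↑(insert (0 : F) (cyclo α e f 0))) ∧
    (IsPDS q f ((f : ℤ) - 1) 0 (cyclo α e f 0) →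
      ¬ q.Prime ∧ ∃ r, r ∣ beta ∧ r ≠ beta ∧ 0 < r ∧
        f = p ^ r - 1 ∧ e * (p ^ r - 1) = q - 1) := by

  classical
  have hf0 : 0 < f := by omega
  have he0 : 0 < e := by omega
  set C : Finset F := cyclo α e f 0 with hCdef
  -- α ≠ 0
  have hα0 : α ≠ 0 := by
    intro h
    have hsub : (Finset.univ : Finset F) ⊆ {0, 1} := by
      intro x _
      by_cases hx : x = 0
      · simp [hx]
      · obtain ⟨k, hk⟩ := hα x hx
        cases k with
        | zero => simp [hk]
        | succ n => exact absurd (by rw [hk, h, zero_pow (Nat.succ_ne_zero n)]) hx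
    have hle := Finset.card_le_card hsub
    rw [Finset.card_univ, hq] at hle
    have h21 : ({0, 1} : Finset F).card ≤ 2 := Finset.card_insert_le _ _ |>.trans (by simp)
    have h4 : 2 * 2 ≤ e * f := Nat.mul_le_mul he hf
    omega
  -- order of α is e * f
  have horder : orderOf α = e * f := by
    set u : Fˣ := Units.mk0 α hα0 with hu
    have hzp : ∀ v : Fˣ, v ∈ Subgroup.zpowers u := by
      intro v
      obtain ⟨k, hk⟩ := hα (v : F) (Units.ne_zero v)
      refine ⟨(k : ℤ), ?_⟩
      have : ((u ^ (k : ℤ) : Fˣ) : F) = (v : F) := by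
        rw [zpow_natCast, Units.val_pow_eq_pow_val]
        simp [hu, hk]
      exact Units.ext this
    have h1 : orderOf u = Nat.card Fˣ := orderOf_eq_card_of_forall_mem_zpowers hzp
    have h2 : orderOf α = orderOf u := by
      rw [← orderOf_units]
      rfl
    rw [h2, h1, Nat.card_eq_fintype_card, Fintype.card_units, hq, hef]
    omega
  -- order of α^e is f
  have hofe : orderOf (α ^ e) = f := by
    rw [orderOf_pow' α he0.ne', horder, Nat.gcd_eq_right ⟨f, rfl⟩, Nat.mul_div_cancel_left f he0]
  have hpowf1 : (α ^ e) ^ f = 1 := by rw [← hofe]; exact pow_orderOf_eq_one _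
  -- membership in C
  have hmem : ∀ x : F, x ∈ C ↔ ∃ j < f, (α ^ e) ^ j = x := by
    intro x
    simp [hCdef, cyclo, Finset.mem_image, Finset.mem_range, pow_mul]
  -- card of C
  have hcardC : C.card = f := by
    rw [hCdef]
    unfold cyclo
    rw [Finset.card_image_of_injOn, Finset.card_range]
    intro a ha b hb hab
    simp only [Finset.coe_range, Set.mem_Iio] at ha hb
    simp only [zero_add, pow_mul] at hab
    exact pow_injOn_Iio_orderOf (by rw [hofe]; exact Set.mem_Iio.2 ha)
      (by rw [hofe]; exact Set.mem_Iio.2 hb) hab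
  -- C = f-th roots of unity
  have hpow : ∀ x : F, x ∈ C ↔ x ^ f = 1 := by
    have hsubset : C ⊆ Finset.univ.filter (fun x : F => x ^ f = 1) := by
      intro x hx
      rw [hmem] at hx
      obtain ⟨j, hj, rfl⟩ := hx
      simp only [Finset.mem_filter, Finset.mem_univ, true_and]
      calc ((α ^ e) ^ j) ^ f = ((α ^ e) ^ f) ^ j := pow_right_comm _ _ _
        _ = 1 := by rw [hpowf1, one_pow]
    have hle : (Finset.univ.filter (fun x : F => x ^ f = 1)).card ≤ f := by
      have h1 : Finset.univ.filter (fun x : F => x ^ f = 1)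
          ⊆ (Polynomial.nthRoots f (1 : F)).toFinset := by
        intro x hx
        simp only [Finset.mem_filter, Finset.mem_univ, true_and] at hx
        rw [Multiset.mem_toFinset, Polynomial.mem_nthRoots hf0]
        exact hx
      calc (Finset.univ.filter (fun x : F => x ^ f = 1)).card
          ≤ (Polynomial.nthRoots f (1 : F)).toFinset.card := Finset.card_le_card h1
        _ ≤ Multiset.card (Polynomial.nthRoots f (1 : F)) := Multiset.toFinset_card_le _
        _ ≤ f := Polynomial.card_nthRoots f 1
    have heq : C = Finset.univ.filter (fun x : F => x ^ f = 1) :=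
      Finset.eq_of_subset_of_card_le hsubset (by rw [hcardC]; exact hle)
    intro x
    rw [heq]
    simp
  have h0C : (0 : F) ∉ C := by
    rw [hpow, zero_pow hf0.ne']
    exact fun h => zero_ne_one h
  have hne0 : ∀ x ∈ C, x ≠ 0 := fun x hx h => h0C (h ▸ hx)
  have h1C : (1 : F) ∈ C := (hpow 1).2 (one_pow f)
  have hmulC : ∀ x ∈ C, ∀ y ∈ C, x * y ∈ C := by
    intro x hx y hy
    rw [hpow] at hx hy ⊢
    rw [mul_pow, hx, hy, mul_one]
  have hinvC : ∀ x ∈ C, x⁻¹ ∈ C := by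
    intro x hx
    rw [hpow] at hx ⊢
    rw [inv_pow, hx, inv_one]
  -- counting lemma
  have hcount : ∀ x : F, (intDiff C).count x
      = ((C ×ˢ C).filter (fun p => p.1 ≠ p.2 ∧ x = p.1 - p.2)).card := by
    intro x
    rw [intDiff, Multiset.count_map, ← Finset.filter_val, Finset.filter_filter]
    rfl
  -- the main iff
  have hiff : IsPDS q f ((f : ℤ) - 1) 0 (cyclo α e f 0) ↔
      ∃ S : Subfield F, (S : Set F) = ↑(insert (0 : F) (cyclo α e f 0)) := by
    constructor
    · -- PDS → subfield
      rintro ⟨-, -, hcnt⟩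
      have hsubC : ∀ a ∈ C, ∀ b ∈ C, a ≠ b → a - b ∈ C := by
        intro a ha b hb hab
        by_contra hx
        have hx0 : a - b ≠ 0 := sub_ne_zero.2 hab
        have h1 := hcnt (a - b)
        rw [if_neg hx, if_neg hx0] at h1
        have h2 : (0 < ((C ×ˢ C).filter
            (fun p => p.1 ≠ p.2 ∧ (a - b) = p.1 - p.2)).card) := by
          refine Finset.card_pos.2 ⟨(a, b), ?_⟩
          simp [Finset.mem_filter, Finset.mem_product, ha, hb, hab]
        rw [hcount] at h1
        omega
      have hneg1 : (-1 : F) ∈ C := by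
        obtain ⟨a, ha, b, hb, hab⟩ := Finset.one_lt_card.mp (by rw [hcardC]; exact hf)
        have h1 : (a - b) ∈ C := hsubC a ha b hb hab
        have h2 : (b - a) ∈ C := hsubC b hb a ha (Ne.symm hab)
        rw [hpow] at h1 h2 ⊢
        have hba : (b - a) = (-1) * (a - b) := by ring
        rw [hba, mul_pow, h1, mul_one] at h2
        exact h2
      have hnegC : ∀ x ∈ C, -x ∈ C := by
        intro x hx
        have := hmulC _ hneg1 _ hx
        rwa [neg_one_mul] at this
      have haddS : ∀ a ∈ C, ∀ b ∈ C, a + b = 0 ∨ a + b ∈ C := by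
        intro a ha b hb
        by_cases h : a = -b
        · left; rw [h]; ring
        · right
          have h2 : a - (-b) ∈ C := hsubC a ha (-b) (hnegC b hb) h
          rwa [sub_neg_eq_add] at h2
      refine ⟨⟨⟨⟨⟨⟨(↑(insert (0 : F) C) : Set F), ?_⟩, ?_⟩, ?_, ?_⟩, ?_⟩, ?_⟩, rfl⟩
      · -- mul_mem
        rintro a b ha hb
        simp only [Finset.coe_insert, Set.mem_insert_iff, Finset.mem_coe] at ha hb ⊢
        rcases ha with rfl | ha
        · left; rw [zero_mul]
        rcases hb with rfl | hb
        · left; rw [mul_zero]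
        · right; exact hmulC a ha b hb
      · -- one_mem
        simp only [Finset.coe_insert, Set.mem_insert_iff, Finset.mem_coe]
        right; exact h1C
      · -- add_mem
        rintro a b ha hb
        simp only [Finset.coe_insert, Set.mem_insert_iff, Finset.mem_coe] at ha hb ⊢
        rcases ha with rfl | ha
        · rw [zero_add]; exact hb
        rcases hb with rfl | hb
        · rw [add_zero]; right; exact ha
        · rcases haddS a ha b hb with h | h
          · left; exact h
          · right; exact h
      · -- zero_mem
        simp only [Finset.coe_insert, Set.mem_insert_iff, Finset.mem_coe]
        exact Or.inl trivial
      · -- neg_mem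
        intro a ha
        simp only [Finset.coe_insert, Set.mem_insert_iff, Finset.mem_coe] at ha ⊢
        rcases ha with rfl | ha
        · left; rw [neg_zero]
        · right; exact hnegC a ha
      · -- inv_mem
        intro a ha
        simp only [Finset.coe_insert, Set.mem_insert_iff, Finset.mem_coe] at ha ⊢
        rcases ha with rfl | ha
        · left; rw [inv_zero]
        · right; exact hinvC a ha
    · -- subfield → PDS
      rintro ⟨S, hS⟩
      have hSmem : ∀ x : F, x ∈ S ↔ x = 0 ∨ x ∈ C := by
        intro x
        rw [← SetLike.mem_coe, hS]
        simp [hCdef]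
      refine ⟨hq, hcardC, ?_⟩
      intro x
      rw [hcount]
      by_cases hx : x ∈ C
      · rw [if_pos hx]
        have hxne : x ≠ 0 := hne0 x hx
        have hnegx : -x ∈ C := by
          have h1 : -x ∈ S := S.neg_mem ((hSmem x).2 (Or.inr hx))
          rcases (hSmem _).1 h1 with h | h
          · exact absurd (neg_eq_zero.mp h) hxne
          · exact h
        have hbij : ((C ×ˢ C).filter (fun p => p.1 ≠ p.2 ∧ x = p.1 - p.2)).card
            = (C.erase (-x)).card := by
          apply Finset.card_bij' (fun p _ => p.2) (fun b _ => (b + x, b))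
          · rintro ⟨a, b⟩ hab
            simp only [Finset.mem_filter, Finset.mem_product] at hab
            obtain ⟨⟨ha, hb⟩, hne', hxe⟩ := hab
            refine Finset.mem_erase.2 ⟨?_, hb⟩
            intro hbe
            have hb2 : b = -x := hbe
            apply h0C
            have ha0 : a = 0 := by
              have h3 : a = x + b := by rw [hxe]; ring
              rw [h3, hb2]; ring
            rwa [ha0] at ha
          · intro b hb
            rw [Finset.mem_erase] at hb
            obtain ⟨hbne, hbC⟩ := hb
            simp only [Finset.mem_filter, Finset.mem_product]
            refine ⟨⟨?_, hbC⟩, ?_, by ring⟩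
            · have h1 : b + x ∈ S :=
                S.add_mem ((hSmem b).2 (Or.inr hbC)) ((hSmem x).2 (Or.inr hx))
              rcases (hSmem _).1 h1 with h | h
              · exact absurd (by rw [eq_neg_of_add_eq_zero_left h]) hbne
              · exact h
            · intro h
              apply hxne
              simpa using congrArg (fun y => y - b) h
          · rintro ⟨a, b⟩ hab
            simp only [Finset.mem_filter, Finset.mem_product] at hab
            obtain ⟨⟨ha, hb⟩, hne', hxe⟩ := hab
            have : b + x = a := by rw [hxe]; ring
            simp [this]
          · intro b hb
            rfl
        rw [hbij, Finset.card_erase_of_mem hnegx, hcardC]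
        have : (1 : ℕ) ≤ f := hf0
        push_cast [Nat.cast_sub this]
        ring
      · rw [if_neg hx]
        have hempty : ((C ×ˢ C).filter (fun p => p.1 ≠ p.2 ∧ x = p.1 - p.2)) = ∅ := by
          rw [Finset.eq_empty_iff_forall_notMem]
          rintro ⟨a, b⟩ hab
          simp only [Finset.mem_filter, Finset.mem_product] at hab
          obtain ⟨⟨ha, hb⟩, hne', hxe⟩ := hab
          by_cases hx0 : x = 0
          · exact hne' (by rw [hx0] at hxe; exact sub_eq_zero.mp hxe.symm)
          · apply hx
            have h1 : x ∈ S := by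
              rw [hxe]
              exact S.sub_mem ((hSmem a).2 (Or.inr ha)) ((hSmem b).2 (Or.inr hb))
            rcases (hSmem x).1 h1 with h | h
            · exact absurd h hx0
            · exact h
        rw [hempty, Finset.card_empty]
        split_ifs <;> rfl
  refine ⟨hiff, fun hPDS => ?_⟩
  obtain ⟨S, hS⟩ := hiff.mp hPDS
  haveI : Fintype S := Fintype.ofFinite S
  -- card of S
  have hcardS : Fintype.card S = f + 1 := by
    have h1 : Fintype.card S = Nat.card S := (Nat.card_eq_fintype_card).symm
    have h2 : Nat.card S = (S : Set F).ncard := Nat.card_coe_set_eq _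
    rw [h1, h2, hS, Set.ncard_coe_finset, Finset.card_insert_of_notMem h0C, hcardC]
  -- characteristic of F is p
  obtain ⟨pc, hpc⟩ := CharP.exists F
  haveI := hpc
  obtain ⟨nn, hpcp, hcF⟩ := FiniteField.card F pc
  have hpceq : pc = p := by
    have hd : pc ∣ p ^ beta := by
      rw [← hpq, ← hq, hcF]
      exact dvd_pow_self pc nn.pos.ne'
    have := (Nat.Prime.dvd_of_dvd_pow hpcp hd)
    exact (Nat.prime_dvd_prime_iff_eq hpcp hp).mp this
  subst hpceq
  haveI : CharP S pc := RingHom.charP S.subtype (S.subtype).injective pc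
  obtain ⟨r, -, hcS⟩ := FiniteField.card S pc
  -- finrank
  have hdim : Fintype.card F = Fintype.card S ^ Module.finrank S F :=
    Module.card_eq_pow_finrank
  rw [hq, hpq, hcS] at hdim
  rw [← pow_mul] at hdim
  have hbeq : beta = (r : ℕ) * Module.finrank S F :=
    Nat.pow_right_injective hp.two_le hdim
  have hfval : f + 1 = pc ^ (r : ℕ) := by rw [← hcardS, hcS]
  have hrlt : (r : ℕ) < beta := by
    have h1 : pc ^ (r : ℕ) < pc ^ beta := by
      rw [← hfval, ← hpq, hef]
      nlinarith
    exact (Nat.pow_lt_pow_iff_right hp.one_lt).mp h1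
  have hbeta2 : 2 ≤ beta := by
    rcases hbeq ▸ hrlt with h
    have hr1 : 1 ≤ (r : ℕ) := r.pos
    nlinarith [hbeq]
  constructor
  · intro hqp
    have hd : pc ∣ q := by rw [hpq]; exact dvd_pow_self pc (by omega)
    rcases (Nat.Prime.eq_one_or_self_of_dvd hqp pc hd) with h | h
    · exact hp.one_lt.ne' h
    · have : pc ^ 1 = pc ^ beta := by rw [pow_one, ← hpq]; exact h
      have := Nat.pow_right_injective hp.two_le this
      omega
  · refine ⟨(r : ℕ), ⟨Module.finrank S F, hbeq⟩, by omega, r.pos, by omega, ?_⟩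
    rw [show pc ^ (r : ℕ) - 1 = f by omega, hef]
    omega
end

section
/- Let q = p^β = ef + 1 be a prime power with e, f > 1, and suppose the cyclotomic class C₀^e is a proper (q, f, λ, μ)-partial difference set. Then: (i) if e > f, then C₀^e ∪ {0} is a subfield of GF(q); (ii) if e < f, then C₀^e ∪ {0} is not a subfield of GF(q) and μ ≥ 1; (iii) the case e = f cannot occur when f > 2. -/
open Finset

section Aux

open Finset

variable {F : Type*} [Field F] [Fintype F] [DecidableEq F]

/-- The finset of ordered pairs of `D` with difference `x`. -/
def Npairs (D : Finset F) (x : F) : Finset (F × F) :=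
  (D ×ˢ D).filter fun p => p.1 - p.2 = x

lemma intDiff_count_eq (D : Finset F) {x : F} (hx : x ≠ 0) :
    (intDiff D).count x = (Npairs D x).card := by
  classical
  rw [intDiff, Multiset.count_map]
  have h1 : ((D ×ˢ D).filter fun p : F × F => p.1 ≠ p.2).val.filter
      (fun a : F × F => x = a.1 - a.2)
      = (((D ×ˢ D).filter fun p : F × F => p.1 ≠ p.2).filter
          (fun a : F × F => x = a.1 - a.2)).val := by
    simp [Finset.filter_val]
  rw [h1, ← Finset.card_def, Finset.filter_filter]
  congr 1
  apply Finset.filter_congr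
  intro a _
  constructor
  · rintro ⟨-, h⟩; exact h.symm
  · intro h
    refine ⟨?_, h.symm⟩
    intro hcon
    rw [hcon, sub_self] at h
    exact hx h.symm

lemma Npairs_symm (D : Finset F) (x : F) : (Npairs D x).card = (Npairs D (-x)).card := by
  classical
  apply Finset.card_nbij' (fun p => (p.2, p.1)) (fun p => (p.2, p.1))
  · intro a ha
    simp only [Finset.mem_coe, Npairs, Finset.mem_filter, Finset.mem_product] at ha ⊢
    exact ⟨⟨ha.1.2, ha.1.1⟩, by linear_combination -ha.2⟩
  · intro a ha
    simp only [Finset.mem_coe, Npairs, Finset.mem_filter, Finset.mem_product] at ha ⊢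
    exact ⟨⟨ha.1.2, ha.1.1⟩, by linear_combination -ha.2⟩
  · intro a _; rfl
  · intro a _; rfl

lemma intDiff_total (D : Finset F) :
    ∑ x : F, ((intDiff D).count x) = D.card * D.card - D.card := by
  classical
  have h1 : ∑ x : F, ((intDiff D).count x) = Multiset.card (intDiff D) := by
    rw [← Multiset.toFinset_sum_count_eq (intDiff D)]
    apply (Finset.sum_subset (Finset.subset_univ _) _).symm
    intro x _ hx
    exact Multiset.count_eq_zero_of_notMem (by simpa using hx)
  rw [h1, intDiff, Multiset.card_map]
  have : ((D ×ˢ D).filter fun p : F × F => p.1 ≠ p.2) = D.offDiag := by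
    ext p; simp [Finset.mem_offDiag, and_assoc]
  rw [show (((D ×ˢ D).filter fun p : F × F => p.1 ≠ p.2)).val.card
      = D.offDiag.card from by rw [this]; rfl]
  exact Finset.offDiag_card D

end Aux

/-- Theorem: let `q = p^β = ef+1` and suppose `C₀^e` is a proper `(q,f,λ,μ)`-PDS.  Then
(i) if `e > f` then `C₀^e ∪ {0}` is a subfield of `GF(q)`; (ii) if `e < f` then
`C₀^e ∪ {0}` is not a subfield and `μ ≥ 1`; (iii) `e = f` cannot occur when `f > 2`. -/
theorem proper_pds_e_vs_f {F : Type*} [Field F] [Fintype F] [DecidableEq F]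
    (q e f p beta : ℕ) (lam mu : ℤ) (α : F)
    (hq : Fintype.card F = q) (hα : IsPrimitiveElt α)
    (hef : q = e * f + 1) (he : 1 < e) (hf : 1 < f)
    (hp : p.Prime) (hbeta : 0 < beta) (hpq : q = p ^ beta)
    (hPDS : IsPDS q f lam mu (cyclo α e f 0)) (hproper : lam ≠ mu) :
    (f < e → ∃ S : Subfield F, (S : Set F) = ↑(insert (0 : F) (cyclo α e f 0))) ∧
    (e < f → (¬ ∃ S : Subfield F, (S : Set F) = ↑(insert (0 : F) (cyclo α e f 0))) ∧ 1 ≤ mu) ∧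
    (2 < f → e ≠ f) := by
  classical
  obtain ⟨-, hcardD, hcount⟩ := hPDS
  set D := cyclo α e f 0 with hDdef
  have hf0 : 0 < f := by omega
  have he0 : 0 < e := by omega
  have hq5 : 5 ≤ q := by nlinarith
  -- α is nonzero
  have hα0 : α ≠ 0 := by
    intro h
    have hsub : (Finset.univ : Finset F) ⊆ {0, 1} := by
      intro x _
      simp only [Finset.mem_insert, Finset.mem_singleton]
      rcases eq_or_ne x 0 with hx | hx
      · exact Or.inl hx
      · obtain ⟨k, hk⟩ := hα x hx
        rcases Nat.eq_zero_or_pos k with hk0 | hk0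
        · rw [hk0, pow_zero] at hk; exact Or.inr hk
        · rw [h, zero_pow (by omega)] at hk; exact absurd hk hx
    have h2 := Finset.card_le_card hsub
    have h3 : (({0, 1} : Finset F)).card ≤ 2 :=
      (Finset.card_insert_le _ _).trans (by simp)
    rw [Finset.card_univ, hq] at h2
    omega
  -- the unit corresponding to α and its order
  set u : Fˣ := Units.mk0 α hα0 with hu
  have hord : orderOf u = e * f := by
    have h1 : orderOf u = Fintype.card Fˣ := by
      rw [← Nat.card_eq_fintype_card]
      apply orderOf_eq_card_of_forall_mem_zpowers
      intro v
      obtain ⟨k, hk⟩ := hα (v : F) (Units.ne_zero v)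
      exact ⟨(k : ℤ), Units.ext (by push_cast [hu, hk]; simp [zpow_natCast])⟩
    rw [h1, Fintype.card_units, hq, hef]
    omega
  have hpow : ∀ m n : ℕ, α ^ m = α ^ n ↔ m ≡ n [MOD e * f] := by
    intro m n
    rw [← hord, ← pow_eq_pow_iff_modEq]
    constructor
    · intro h; exact Units.ext (by simpa [hu] using h)
    · intro h
      have := congrArg (Units.val) h
      simpa [hu] using this
  have hef1 : α ^ (e * f) = 1 := by
    have := (hpow (e * f) 0).2 ((Nat.modEq_zero_iff_dvd).2 dvd_rfl)
    simpa using this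
  -- membership in D
  have hmem : ∀ x : F, x ∈ D ↔ ∃ j : ℕ, x = α ^ (e * j) := by
    intro x
    constructor
    · intro hx
      rw [hDdef, cyclo] at hx
      obtain ⟨j, -, hj⟩ := Finset.mem_image.1 hx
      exact ⟨j, by rw [← hj, zero_add]⟩
    · rintro ⟨j, rfl⟩
      rw [hDdef, cyclo]
      refine Finset.mem_image.2 ⟨j % f, Finset.mem_range.2 (Nat.mod_lt _ hf0), ?_⟩
      rw [zero_add]
      rw [hpow (e * (j % f)) (e * j)]
      exact Nat.ModEq.mul_left' e (Nat.mod_modEq j f)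
  have h1D : (1 : F) ∈ D := (hmem 1).2 ⟨0, by simp⟩
  have h0D : (0 : F) ∉ D := by
    intro h
    obtain ⟨j, hj⟩ := (hmem 0).1 h
    exact pow_ne_zero _ hα0 hj.symm
  have hmulD : ∀ x ∈ D, ∀ y ∈ D, x * y ∈ D := by
    intro x hx y hy
    obtain ⟨j, rfl⟩ := (hmem x).1 hx
    obtain ⟨k, rfl⟩ := (hmem y).1 hy
    exact (hmem _).2 ⟨j + k, by rw [← pow_add, Nat.mul_add]⟩
  have hinvD : ∀ x ∈ D, x⁻¹ ∈ D := by
    intro x hx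
    obtain ⟨j, rfl⟩ := (hmem x).1 hx
    refine (hmem _).2 ⟨(f - 1) * j, inv_eq_of_mul_eq_one_right ?_⟩
    rw [← pow_add]
    have harith : e * j + e * ((f - 1) * j) = (e * f) * j := by
      have h : f - 1 + 1 = f := Nat.succ_pred_eq_of_pos hf0
      calc e * j + e * ((f - 1) * j) = e * ((f - 1 + 1) * j) := by ring
        _ = (e * f) * j := by rw [h]; ring
    rw [harith, pow_mul, hef1, one_pow]
  -- counting facts
  have hcnt : ∀ x : F, x ≠ 0 → ((Npairs D x).card : ℤ) = if x ∈ D then lam else mu := by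
    intro x hx
    have h := hcount x
    rw [intDiff_count_eq D hx] at h
    simpa [hx] using h
  have hlam_nonneg : 0 ≤ lam := by
    have h := hcnt 1 one_ne_zero
    rw [if_pos h1D] at h
    rw [← h]; positivity
  have hαnotD : α ∉ D := by
    intro h
    obtain ⟨j, hj⟩ := (hmem α).1 h
    have h1 : (1 : ℕ) ≡ e * j [MOD e * f] := by
      rw [← hpow 1 (e * j), pow_one]; exact hj
    have h2 : (1 : ℕ) ≡ e * j [MOD e] := h1.of_dvd (dvd_mul_right e f)
    have h3 : 1 % e = (e * j) % e := h2
    rw [Nat.mul_mod_right, Nat.mod_eq_of_lt he] at h3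
    exact one_ne_zero h3
  have hmu_nonneg : 0 ≤ mu := by
    have h := hcnt α hα0
    rw [if_neg hαnotD] at h
    rw [← h]; positivity
  have hneg1D : (-1 : F) ∈ D := by
    by_contra h
    have hne : (-1 : F) ≠ 0 := by simp
    have h1 : ((Npairs D 1).card : ℤ) = lam := by rw [hcnt 1 one_ne_zero, if_pos h1D]
    have h2 : ((Npairs D (-1)).card : ℤ) = mu := by rw [hcnt (-1) hne, if_neg h]
    apply hproper
    rw [← h1, ← h2, Npairs_symm D 1]
  -- the fundamental counting identity
  have hkey : lam + ((e : ℤ) - 1) * mu = (f : ℤ) - 1 := by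
    have hsum : ∑ x : F, ((intDiff D).count x : ℤ) = ((f * f - f : ℕ) : ℤ) := by
      rw [← Nat.cast_sum]
      exact_mod_cast congrArg (fun n : ℕ => (n : ℤ)) (by rw [intDiff_total D, hcardD])
    rw [Finset.sum_congr rfl (fun x _ => hcount x)] at hsum
    rw [Finset.sum_ite] at hsum
    have hfilter1 : Finset.univ.filter (fun x : F => x ∈ D) = D := by
      ext x; simp
    rw [hfilter1, Finset.sum_const, hcardD] at hsum
    rw [Finset.sum_ite] at hsum
    have h0mem : (0 : F) ∈ Finset.univ.filter (fun x : F => ¬ x ∈ D) := by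
      simp [h0D]
    have hfilter2 : ((Finset.univ.filter (fun x : F => ¬ x ∈ D)).filter
        (fun x : F => ¬ x = 0)).card = q - f - 1 := by
      have hc1 : (Finset.univ.filter (fun x : F => ¬ x ∈ D)).card = q - f := by
        have := Finset.card_filter_add_card_filter_not
          (s := (Finset.univ : Finset F)) (p := fun x : F => x ∈ D)
        rw [hfilter1, hcardD, Finset.card_univ, hq] at this
        omega
      have : (Finset.univ.filter (fun x : F => ¬ x ∈ D)).filter (fun x : F => ¬ x = 0)
          = (Finset.univ.filter (fun x : F => ¬ x ∈ D)).erase 0 := by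
        rw [← Finset.filter_ne']
      rw [this, Finset.card_erase_of_mem h0mem, hc1]
    rw [Finset.sum_const_zero, Finset.sum_const, hfilter2] at hsum
    -- hsum : f • lam + (0 + (q - f - 1) • mu) = ((f*f - f : ℕ) : ℤ)
    have hc2 : ((f * f - f : ℕ) : ℤ) = (f : ℤ) * ((f : ℤ) - 1) := by
      have : f ≤ f * f := Nat.le_mul_of_pos_left f hf0
      push_cast [Nat.cast_sub this]
      ring
    have hc3 : ((q - f - 1 : ℕ) : ℤ) = (f : ℤ) * ((e : ℤ) - 1) := by
      have h1 : q - f - 1 = e * f - f := by omega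
      have h2 : f ≤ e * f := Nat.le_mul_of_pos_left f he0
      rw [h1, Nat.cast_sub h2]
      push_cast; ring
    rw [nsmul_eq_mul, nsmul_eq_mul, hc2, hc3, zero_add] at hsum
    have hfne : (f : ℤ) ≠ 0 := by exact_mod_cast hf0.ne'
    apply mul_left_cancel₀ hfne
    linear_combination hsum
  -- if mu = 0, D ∪ {0} is a subfield
  have hsubfield : mu = 0 → ∃ S : Subfield F, (S : Set F) = ↑(insert (0 : F) D) := by
    intro hmu0
    have hclosed : ∀ a ∈ D, ∀ b ∈ D, a ≠ b → a - b ∈ D := by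
      intro a ha b hb hab
      by_contra hcon
      have hne : a - b ≠ 0 := sub_ne_zero.2 hab
      have h1 : ((Npairs D (a - b)).card : ℤ) = mu := by rw [hcnt _ hne, if_neg hcon]
      have h2 : (a, b) ∈ Npairs D (a - b) := by
        simp [Npairs, ha, hb]
      have h3 : 0 < (Npairs D (a - b)).card := Finset.card_pos.2 ⟨(a, b), h2⟩
      rw [hmu0] at h1
      exact_mod_cast absurd h1 (by exact_mod_cast h3.ne')
    have hmemK : ∀ x : F, x ∈ (↑(insert (0 : F) D) : Set F) ↔ x = 0 ∨ x ∈ D := by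
      intro x; simp
    have haddD : ∀ a ∈ D, ∀ b ∈ D, a + b = 0 ∨ a + b ∈ D := by
      intro a ha b hb
      rcases eq_or_ne a (-b) with h | h
      · left; rw [h]; ring
      · right
        have hnb : -b ∈ D := by
          have := hmulD (-1) hneg1D b hb
          simpa using this
        have : a - (-b) ∈ D := hclosed a ha (-b) hnb (by simpa using h)
        simpa using this
    refine ⟨{ carrier := ↑(insert (0 : F) D)
              one_mem' := ?one
              zero_mem' := ?zero
              mul_mem' := ?mul
              add_mem' := ?add
              neg_mem' := ?neg
              inv_mem' := ?inv }, rfl⟩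
    case one => exact (hmemK 1).2 (Or.inr h1D)
    case zero => exact (hmemK 0).2 (Or.inl rfl)
    case mul =>
      intro a b ha hb
      rcases (hmemK a).1 ha with h | h
      · exact (hmemK _).2 (Or.inl (by rw [h, zero_mul]))
      · rcases (hmemK b).1 hb with h' | h'
        · exact (hmemK _).2 (Or.inl (by rw [h', mul_zero]))
        · exact (hmemK _).2 (Or.inr (hmulD a h b h'))
    case add =>
      intro a b ha hb
      rcases (hmemK a).1 ha with h | h
      · refine (hmemK _).2 ?_
        rw [h, zero_add]
        exact (hmemK b).1 hb
      · rcases (hmemK b).1 hb with h' | h'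
        · refine (hmemK _).2 ?_
          rw [h', add_zero]
          exact Or.inr h
        · exact (hmemK _).2 (haddD a h b h')
    case neg =>
      intro a ha
      rcases (hmemK a).1 ha with h | h
      · exact (hmemK _).2 (Or.inl (by rw [h, neg_zero]))
      · refine (hmemK _).2 (Or.inr ?_)
        have := hmulD (-1) hneg1D a h
        simpa using this
    case inv =>
      intro a ha
      rcases (hmemK a).1 ha with h | h
      · exact (hmemK _).2 (Or.inl (by rw [h, inv_zero]))
      · exact (hmemK _).2 (Or.inr (hinvD a h))
  -- a subfield forces e ≥ f + 2
  have hbound : (∃ S : Subfield F, (S : Set F) = ↑(insert (0 : F) D)) → f + 2 ≤ e := by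
    rintro ⟨S, hS⟩
    haveI : Fintype S := Fintype.ofFinite S
    have hcS : Fintype.card S = f + 1 := by
      have e1 : Nat.card S = Nat.card (↑(insert (0 : F) D) : Set F) :=
        Nat.card_congr (Equiv.setCongr hS)
      rw [Nat.card_eq_fintype_card] at e1
      rw [e1, Nat.card_coe_set_eq, Set.ncard_coe_finset,
        Finset.card_insert_of_notMem h0D, hcardD]
    have hqpow : q = (f + 1) ^ (Module.finrank S F) := by
      rw [← hq, Module.card_eq_pow_finrank (K := S) (V := F), hcS]
    set t := Module.finrank S F with ht
    have ht2 : 2 ≤ t := by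
      by_contra hcon
      interval_cases t
      · simp at hqpow; omega
      · rw [pow_one] at hqpow; nlinarith
    have hge : (f + 1) ^ 2 ≤ (f + 1) ^ t := Nat.pow_le_pow_right (by omega) ht2
    rw [← hqpow] at hge
    nlinarith
  refine ⟨?_, ?_, ?_⟩
  · -- case e > f
    intro hfe
    apply hsubfield
    have hfe' : (f : ℤ) < e := by exact_mod_cast hfe
    have h1 : mu * ((e : ℤ) - 1) ≤ (f : ℤ) - 1 := by linarith [hkey, hlam_nonneg]
    have h2 : mu * (f : ℤ) ≤ mu * ((e : ℤ) - 1) :=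
      mul_le_mul_of_nonneg_left (by linarith) hmu_nonneg
    have h3 : mu * (f : ℤ) < 1 * (f : ℤ) := by
      have hfpos : (0 : ℤ) < f := by exact_mod_cast hf0
      linarith
    have := lt_of_mul_lt_mul_right h3 (by positivity : (0:ℤ) ≤ (f:ℤ))
    omega
  · -- case e < f
    intro hef'
    have hnotsub : ¬ ∃ S : Subfield F, (S : Set F) = ↑(insert (0 : F) D) := by
      intro hS
      have := hbound hS
      omega
    refine ⟨hnotsub, ?_⟩
    rcases eq_or_lt_of_le hmu_nonneg with h | h
    · exact absurd (hsubfield h.symm) hnotsub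
    · omega
  · -- case e = f impossible for f > 2
    intro hf2 hefeq
    subst hefeq
    have hmu_pos : 1 ≤ mu := by
      rcases eq_or_lt_of_le hmu_nonneg with h | h
      · exact absurd (hbound (hsubfield h.symm)) (by omega)
      · omega
    have hepos : (1 : ℤ) ≤ (e : ℤ) - 1 := by
      have : (2 : ℤ) < e := by exact_mod_cast hf2
      linarith
    have hprod : ((e : ℤ) - 1) * (mu - 1) = -lam := by linear_combination hkey
    have hmu1 : mu = 1 := by
      by_contra hcon
      have h2 : 2 ≤ mu := by omega
      have h3 : 0 < ((e : ℤ) - 1) * (mu - 1) := mul_pos (by linarith) (by linarith)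
      linarith
    have hlam0 : lam = 0 := by
      rw [hmu1] at hkey
      linarith
    -- w = α^e ∈ D, w ≠ 1, w ≠ -1
    set w : F := α ^ e with hw
    have hwD : w ∈ D := (hmem w).2 ⟨1, by rw [mul_one]⟩
    have hw1 : w ≠ 1 := by
      intro hcon
      have h1 : α ^ e = α ^ 0 := by rw [pow_zero]; exact hcon
      have h2 : e ≡ 0 [MOD e * e] := (hpow e 0).1 h1
      have h3 : e * e ∣ e := (Nat.modEq_zero_iff_dvd).1 h2
      have h4 := Nat.le_of_dvd he0 h3
      have h5 : e * 2 ≤ e * e := Nat.mul_le_mul_left e (by omega)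
      omega
    have hwne : w ≠ -1 := by
      intro hcon
      have h1 : α ^ (e * 2) = α ^ 0 := by
        rw [pow_zero, pow_mul, ← hw, hcon]; ring
      have h2 : e * 2 ≡ 0 [MOD e * e] := (hpow (e * 2) 0).1 h1
      have h3 : e * e ∣ e * 2 := (Nat.modEq_zero_iff_dvd).1 h2
      have h4 := Nat.le_of_dvd (by omega) h3
      have h5 : e ≤ 2 := Nat.le_of_mul_le_mul_left h4 he0
      omega
    have hnwD : -w ∈ D := by
      have := hmulD (-1) hneg1D w hwD
      simpa using this
    set d : F := w - 1 with hd
    have hd0 : d ≠ 0 := sub_ne_zero.2 hw1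
    have hp1 : (w, 1) ∈ Npairs D d := by simp [Npairs, hwD, h1D, hd]
    have hp2 : ((-1 : F), -w) ∈ Npairs D d := by
      simp only [Npairs, Finset.mem_filter, Finset.mem_product]
      exact ⟨⟨hneg1D, hnwD⟩, by rw [hd]; ring⟩
    have hpair_ne : ((w, (1 : F)) : F × F) ≠ ((-1 : F), -w) := by
      intro hcon
      exact hwne (congrArg Prod.fst hcon)
    have hcard2 : 2 ≤ (Npairs D d).card := by
      have hsubset : ({(w, (1:F)), ((-1:F), -w)} : Finset (F × F)) ⊆ Npairs D d := by
        intro x hx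
        rcases Finset.mem_insert.1 hx with h | h
        · rw [h]; exact hp1
        · rw [Finset.mem_singleton.1 h]; exact hp2
      have := Finset.card_le_card hsubset
      rwa [Finset.card_insert_of_notMem (by simpa using hpair_ne),
        Finset.card_singleton] at this
    have hfin := hcnt d hd0
    by_cases hdD : d ∈ D
    · rw [if_pos hdD, hlam0] at hfin
      exact_mod_cast absurd hfin (by exact_mod_cast (by omega : ¬ (Npairs D d).card = 0))
    · rw [if_neg hdD, hmu1] at hfin
      exact_mod_cast absurd hfin (by exact_mod_cast (by omega : ¬ (Npairs D d).card = 1))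
end

section
/- Let GF(q) be a finite field of order q = ef + 1 = ερ + 1, where q is a prime power, e, f, ε, ρ > 1, ε | e and e > ε. Suppose C₀^ε is a proper (q, ef/ε, λ, μ)-partial difference set, and let C₀^ε′ = {C₀^e, C_ε^e, …, C_{e−ε}^e}. Then: (i) if φ_i ≠ φ_j for some distinct i, j ∈ {1, …, ε−1}, then C₀^ε′ is neither a disjoint partial difference family nor an external partial difference family. Otherwise, let κ = φ₁ − φ₀. (ii) If κ = 0, then C₀^ε′ is a (q, e/ε, f, (f−1)/ε)-disjoint difference family and a (q, e/ε, f, λ − (f−1)/ε, μ − (f−1)/ε)-external partial difference family. (iii) If κ = μ − λ, then C₀^ε′ is a (q, e/ε, f, (e−ε)f/ε²)-external difference family and a (q, e/ε, f, λ − (e−ε)f/ε², μ − (e−ε)f/ε²)-disjoint partial difference family. (iv) If κ ∉ {0, μ−λ}, then C₀^ε′ is a proper (q, e/ε, f, φ₀, φ₀+κ)-disjoint partial difference family and a proper (q, e/ε, f, λ − φ₀, μ − φ₀ − κ)-external partial difference family. -/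
open Finset

section AuxCounting

set_option linter.unusedSectionVars false
set_option maxHeartbeats 1600000

variable {G : Type*} [AddGroup G] [DecidableEq G]

lemma count_intDiff (D : Finset G) (x : G) :
    (intDiff D).count x = ((D ×ˢ D).filter fun p => p.1 ≠ p.2 ∧ p.1 - p.2 = x).card := by
  rw [intDiff, Multiset.count_map, ← Finset.filter_val, Finset.filter_filter]
  show Multiset.card _ = Finset.card _
  rw [Finset.card]
  congr 2
  ext p
  simp [eq_comm]

lemma count_extDiff (D₁ D₂ : Finset G) (x : G) :
    (extDiff D₁ D₂).count x = ((D₁ ×ˢ D₂).filter fun p => p.1 - p.2 = x).card := by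
  rw [extDiff, Multiset.count_map, ← Finset.filter_val]
  show Multiset.card _ = Finset.card _
  rw [Finset.card]
  congr 2
  ext p
  simp [eq_comm]

variable {ι : Type*} [Fintype ι] [DecidableEq ι]

lemma count_famInt (D : ι → Finset G) (x : G) :
    (famInt D).count x = ∑ i, (intDiff (D i)).count x := by
  rw [famInt]
  exact Multiset.count_sum'

lemma count_famExt (D : ι → Finset G) (x : G) :
    (famExt D).count x = ∑ i, ∑ j, if j = i then 0 else (extDiff (D i) (D j)).count x := by
  rw [famExt, Multiset.count_sum']
  refine Finset.sum_congr rfl fun i _ => ?_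
  rw [Multiset.count_sum']
  refine Finset.sum_congr rfl fun j _ => ?_
  split <;> simp

lemma card_intDiff (D : Finset G) :
    Multiset.card (intDiff D) = D.card * (D.card - 1) := by
  rw [intDiff, Multiset.card_map]
  show Finset.card _ = _
  have h1 : ((D ×ˢ D).filter fun p => p.1 = p.2).card = D.card := by
    rw [Finset.card_bij (fun p _ => p.1)]
    · intro p hp; simp only [Finset.mem_filter, Finset.mem_product] at hp; exact hp.1.1
    · intro p hp q hq h
      simp only [Finset.mem_filter, Finset.mem_product] at hp hq
      exact Prod.ext h (hp.2 ▸ hq.2 ▸ h)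
    · intro b hb; exact ⟨(b, b), by simp [hb], rfl⟩
  have h2 := Finset.card_filter_add_card_filter_not (s := D ×ˢ D)
    (p := fun p => p.1 = p.2)
  rw [Finset.card_product] at h2
  simp only [ne_eq]
  rw [Nat.mul_sub, mul_one]
  omega

lemma card_extDiff (D₁ D₂ : Finset G) :
    Multiset.card (extDiff D₁ D₂) = D₁.card * D₂.card := by
  rw [extDiff, Multiset.card_map]
  show Finset.card _ = _
  rw [Finset.card_product]

lemma mcard_sum {κ : Type*} (s : Finset κ) (g : κ → Multiset G) :
    Multiset.card (∑ i ∈ s, g i) = ∑ i ∈ s, Multiset.card (g i) := by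
  classical
  induction s using Finset.cons_induction with
  | empty => simp
  | cons a s ha ih => simp [Finset.sum_cons, ih]

lemma count_union_eq (D : ι → Finset G) (hdisj : ∀ i j, i ≠ j → Disjoint (D i) (D j)) (x : G) :
    (intDiff (famU D)).count x = (famInt D).count x + (famExt D).count x := by
  classical
  rw [count_intDiff, count_famInt, count_famExt]
  have hU : famU D ×ˢ famU D =
      (Finset.univ : Finset (ι × ι)).biUnion fun ij => D ij.1 ×ˢ D ij.2 := by
    ext p
    simp [famU, Finset.mem_product, Finset.mem_biUnion]
  have hPdisj : ∀ ij ∈ (Finset.univ : Finset (ι × ι)), ∀ kl ∈ (Finset.univ : Finset (ι × ι)),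
      ij ≠ kl → Disjoint ((D ij.1 ×ˢ D ij.2).filter fun p => p.1 ≠ p.2 ∧ p.1 - p.2 = x)
        ((D kl.1 ×ˢ D kl.2).filter fun p => p.1 ≠ p.2 ∧ p.1 - p.2 = x) := by
    intro ij _ kl _ hne
    rw [Finset.disjoint_left]
    intro p hp hq
    simp only [Finset.mem_filter, Finset.mem_product] at hp hq
    by_cases h1 : ij.1 = kl.1
    · have h2 : ij.2 ≠ kl.2 := fun h2 => hne (Prod.ext h1 h2)
      exact absurd hq.1.2 (Finset.disjoint_left.1 (hdisj _ _ h2) hp.1.2)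
    · exact absurd hq.1.1 (Finset.disjoint_left.1 (hdisj _ _ h1) hp.1.1)
  rw [hU, Finset.filter_biUnion, Finset.card_biUnion hPdisj]
  conv_lhs => rw [← Finset.univ_product_univ]
  rw [Finset.sum_product (f := fun u : ι × ι =>
    ((D u.1 ×ˢ D u.2).filter fun p => p.1 ≠ p.2 ∧ p.1 - p.2 = x).card)]
  rw [← Finset.sum_add_distrib]
  refine Finset.sum_congr rfl fun i _ => ?_
  have hsplit : ∀ j : ι,
      ((D i ×ˢ D j).filter fun p => p.1 ≠ p.2 ∧ p.1 - p.2 = x).card =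
      (if j = i then ((D i ×ˢ D i).filter fun p => p.1 ≠ p.2 ∧ p.1 - p.2 = x).card else 0) +
      (if j = i then 0 else (extDiff (D i) (D j)).count x) := by
    intro j
    by_cases h : j = i
    · subst h; simp
    · simp only [h, if_false, if_neg, zero_add]
      rw [count_extDiff]
      congr 1
      apply Finset.filter_congr
      intro p hp
      simp only [Finset.mem_product] at hp
      have : p.1 ≠ p.2 := fun he =>
        absurd (he ▸ hp.2) (Finset.disjoint_left.1 (hdisj i j (fun hh => h hh.symm)) hp.1)
      simp [this]
  rw [Finset.sum_congr rfl fun j _ => hsplit j, Finset.sum_add_distrib,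
    Finset.sum_ite_eq' Finset.univ i]
  simp [count_intDiff]

lemma sum_count_eq_card {H : Type*} [DecidableEq H] [Fintype H] (s : Multiset H) :
    ∑ x : H, s.count x = Multiset.card s := by
  rw [← Multiset.toFinset_sum_count_eq s]
  symm
  apply Finset.sum_subset (Finset.subset_univ _)
  intro x _ hx
  simpa using hx

lemma total_count {H : Type*} [DecidableEq H] [Fintype H] [Zero H] (s : Multiset H) (c : ℕ)
    (h0 : s.count 0 = 0) (h : ∀ x : H, x ≠ 0 → s.count x = c) :
    Multiset.card s = c * (Fintype.card H - 1) := by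
  rw [← sum_count_eq_card s]
  rw [← Finset.add_sum_erase _ _ (Finset.mem_univ (0 : H)), h0, zero_add]
  rw [Finset.sum_congr rfl (fun x hx => h x (Finset.ne_of_mem_erase hx))]
  rw [Finset.sum_const, smul_eq_mul,
    Finset.card_erase_of_mem (Finset.mem_univ 0), Finset.card_univ, mul_comm]

end AuxCounting

section AuxCyclo

set_option linter.unusedSectionVars false
set_option linter.unusedVariables false
set_option maxHeartbeats 1600000

variable {F : Type*} [Field F] [DecidableEq F]

section Cyc

variable {α : F} {N : ℕ}

lemma mem_cyclo' (hN : 0 < N) (hpow : ∀ a b : ℕ, α ^ a = α ^ b ↔ a ≡ b [MOD N])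
    {d s i : ℕ} (hds : d * s = N) {x : F} :
    x ∈ cyclo α d s i ↔ ∃ m, x = α ^ m ∧ m ≡ i [MOD d] := by
  have hd : 0 < d := Nat.pos_of_ne_zero (by rintro rfl; simp at hds; omega)
  have hs : 0 < s := Nat.pos_of_ne_zero (by rintro rfl; simp at hds; omega)
  constructor
  · intro h
    simp only [cyclo, Finset.mem_image, Finset.mem_range] at h
    obtain ⟨j, _, rfl⟩ := h
    exact ⟨i + d * j, rfl, (Nat.modEq_iff_dvd' (Nat.le_add_right _ _)).2 ⟨j, by omega⟩ |>.symm⟩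
  · rintro ⟨m, rfl, hm⟩
    simp only [cyclo, Finset.mem_image, Finset.mem_range]
    set m' := m + d * s * (i + 1) with hm'def
    have h1 : α ^ m' = α ^ m := by
      rw [hpow]
      show (m + d * s * (i+1)) % N = m % N
      rw [hds]
      exact Nat.add_mul_mod_self_left m N (i+1)
    have h2 : m' ≡ i [MOD d] := by
      have : m' ≡ m [MOD d] := by
        unfold Nat.ModEq
        calc m' % d = (m + d * (s * (i+1))) % d := by rw [hm'def]; ring_nf
        _ = m % d := Nat.add_mul_mod_self_left m d (s*(i+1))
      exact this.trans hm
    have h3 : i ≤ m' := by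
      have : 1 * (i+1) ≤ d * s * (i+1) := Nat.mul_le_mul_right _ (by nlinarith)
      omega
    obtain ⟨c, hc⟩ : ∃ c, m' = i + d * c := by
      obtain ⟨c, hc⟩ := (Nat.modEq_iff_dvd' h3).1 h2.symm
      exact ⟨c, by omega⟩
    refine ⟨c % s, Nat.mod_lt _ hs, ?_⟩
    rw [← h1, hpow]
    have hdm : c = s * (c / s) + c % s := (Nat.div_add_mod c s).symm
    have : m' = (i + d * (c % s)) + N * (c / s) := by
      rw [hc, ← hds]
      conv_lhs => rw [hdm]
      ring
    unfold Nat.ModEq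
    rw [this]
    exact (Nat.add_mul_mod_self_left _ N _).symm

lemma zero_notMem_cyclo (hα0 : α ≠ 0) {d s i : ℕ} : (0 : F) ∉ cyclo α d s i := by
  simp only [cyclo, Finset.mem_image, Finset.mem_range]
  rintro ⟨j, _, hj⟩
  exact pow_ne_zero _ hα0 hj

lemma cyclo_class_eq' (hN : 0 < N) (hpow : ∀ a b : ℕ, α ^ a = α ^ b ↔ a ≡ b [MOD N])
    {d s i j : ℕ} (hds : d * s = N) {x : F}
    (hx : x ∈ cyclo α d s i) (hy : x ∈ cyclo α d s j) : i ≡ j [MOD d] := by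
  obtain ⟨m, rfl, hm⟩ := (mem_cyclo' hN hpow hds).1 hx
  obtain ⟨m', he, hm'⟩ := (mem_cyclo' hN hpow hds).1 hy
  have h2 : m ≡ m' [MOD d] := by
    have hNd : d ∣ N := hds ▸ Dvd.intro s rfl
    exact ((hpow m m').1 he).of_dvd hNd
  exact hm.symm.trans (h2.trans hm')

lemma card_cyclo (hN : 0 < N) (hpow : ∀ a b : ℕ, α ^ a = α ^ b ↔ a ≡ b [MOD N])
    {d s i : ℕ} (hds : d * s = N) (hi : i < d) :
    (cyclo α d s i).card = s := by
  have hd : 0 < d := lt_of_le_of_lt (Nat.zero_le _) hi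
  rw [cyclo, Finset.card_image_of_injOn, Finset.card_range]
  intro j hj j' hj' hjj
  simp only [Finset.mem_coe, Finset.mem_range] at hj hj'
  have h := (hpow _ _).1 hjj
  have hb1 : i + d * j < N := by
    have h4 : i + d * j ≤ (d - 1) + d * (s - 1) := by
      have := Nat.mul_le_mul_left d (Nat.le_sub_one_of_lt hj)
      omega
    have h5 : (d-1) + d * (s-1) < d * s := by
      have hs : 0 < s := Nat.pos_of_ne_zero (by rintro rfl; simp at hds; omega)
      have : d * (s - 1) + d = d * s := by rw [← Nat.mul_succ]; congr 1; omega
      omega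
    omega
  have hb2 : i + d * j' < N := by
    have h4 : i + d * j' ≤ (d - 1) + d * (s - 1) := by
      have := Nat.mul_le_mul_left d (Nat.le_sub_one_of_lt hj')
      omega
    have h5 : (d-1) + d * (s-1) < d * s := by
      have hs : 0 < s := Nat.pos_of_ne_zero (by rintro rfl; simp at hds; omega)
      have : d * (s - 1) + d = d * s := by rw [← Nat.mul_succ]; congr 1; omega
      omega
    omega
  have := Nat.ModEq.eq_of_lt_of_lt h hb1 hb2
  exact Nat.eq_of_mul_eq_mul_left hd (by omega)

lemma pow_N_eq_one (hN : 0 < N) (hpow : ∀ a b : ℕ, α ^ a = α ^ b ↔ a ≡ b [MOD N]) :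
    α ^ N = 1 := by
  have : α ^ N = α ^ 0 := by rw [hpow]; show N % N = 0 % N; simp
  simpa using this

lemma inv_pow_exp (hN : 0 < N) (hpow : ∀ a b : ℕ, α ^ a = α ^ b ↔ a ≡ b [MOD N]) (m : ℕ) :
    (α ^ m)⁻¹ = α ^ (m * (N - 1)) := by
  refine inv_eq_of_mul_eq_one_right ?_
  rw [← pow_add]
  have h1 : m + m * (N-1) = m * N := by
    have h2 : m * (N-1) = m * N - m := by rw [Nat.mul_sub, mul_one]
    have h3 : m ≤ m * N := Nat.le_mul_of_pos_right m hN
    omega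
  rw [h1, mul_comm, pow_mul, pow_N_eq_one hN hpow, one_pow]

end Cyc

lemma prim_facts (F : Type*) [Field F] [Fintype F] [DecidableEq F] (α : F) (q : ℕ)
    (hq : Fintype.card F = q) (h5 : 3 ≤ q)
    (hα : ∀ x : F, x ≠ 0 → ∃ k : ℕ, x = α ^ k) :
    α ≠ 0 ∧ ∀ a b : ℕ, α ^ a = α ^ b ↔ a ≡ b [MOD (q - 1)] := by
  have hα0 : α ≠ 0 := by
    intro h0
    obtain ⟨b, hb⟩ : ∃ b : F, b ∉ ({0, 1} : Finset F) := by
      by_contra h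
      push_neg at h
      have hsub : (Finset.univ : Finset F) ⊆ {0, 1} := fun b _ => h b
      have h2 := Finset.card_le_card hsub
      have h3 : ({0, 1} : Finset F).card ≤ 2 :=
        (Finset.card_insert_le _ _).trans (by simp)
      rw [Finset.card_univ, hq] at h2
      omega
    simp only [Finset.mem_insert, Finset.mem_singleton, not_or] at hb
    obtain ⟨hb0, hb1⟩ := hb
    obtain ⟨k, hk⟩ := hα b hb0
    rcases Nat.eq_zero_or_pos k with hk0 | hk0
    · exact hb1 (by rw [hk, hk0, pow_zero])
    · exact hb0 (by rw [hk, h0, zero_pow (by omega)])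
  refine ⟨hα0, ?_⟩
  set u : Fˣ := Units.mk0 α hα0 with hu
  have hcoe : ∀ a : ℕ, ((u ^ a : Fˣ) : F) = α ^ a := by
    intro a; rw [Units.val_pow_eq_pow_val]; rfl
  have hdvd : orderOf u ∣ q - 1 := by
    have := orderOf_dvd_card (G := Fˣ) (x := u)
    rwa [Fintype.card_units, hq] at this
  have hord0 : 0 < orderOf u := orderOf_pos u
  have hle : q - 1 ≤ orderOf u := by
    set n := orderOf u
    have hsub : (Finset.univ.erase (0 : F)) ⊆ (Finset.range n).image (fun k => α ^ k) := by
      intro x hx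
      rw [Finset.mem_erase] at hx
      obtain ⟨k, hk⟩ := hα x hx.1
      rw [Finset.mem_image]
      refine ⟨k % n, Finset.mem_range.2 (Nat.mod_lt _ hord0), ?_⟩
      show α ^ (k % n) = x
      calc α ^ (k % n) = ((u ^ (k % n) : Fˣ) : F) := (hcoe _).symm
        _ = ((u ^ k : Fˣ) : F) := by rw [pow_mod_orderOf]
        _ = α ^ k := hcoe _
        _ = x := hk.symm
    have h1 := Finset.card_le_card hsub
    have h2 : ((Finset.range n).image (fun k => α ^ k)).card ≤ n :=
      (Finset.card_image_le).trans (by rw [Finset.card_range])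
    rw [Finset.card_erase_of_mem (Finset.mem_univ 0), Finset.card_univ, hq] at h1
    omega
  have hord : orderOf u = q - 1 :=
    Nat.le_antisymm (Nat.le_of_dvd (by omega) hdvd) hle
  intro a b
  constructor
  · intro h
    have hu' : u ^ a = u ^ b := Units.ext (by rw [hcoe, hcoe]; exact h)
    have := pow_eq_pow_iff_modEq.1 hu'
    rwa [hord] at this
  · intro h
    have hu' : u ^ a = u ^ b := pow_eq_pow_iff_modEq.2 (by rwa [hord])
    calc α ^ a = ((u ^ a : Fˣ) : F) := (hcoe a).symm
      _ = ((u ^ b : Fˣ) : F) := by rw [hu']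
      _ = α ^ b := hcoe b

end AuxCyclo

section AuxMain

set_option linter.unusedSectionVars false
set_option linter.unusedVariables false
set_option maxHeartbeats 1600000

variable {F : Type*} [Field F] [DecidableEq F]
variable {α : F} {N e f eps rho : ℕ}
  (hα0 : α ≠ 0) (hpow : ∀ a b : ℕ, α ^ a = α ^ b ↔ a ≡ b [MOD N])
  (hef : e * f = N) (herho : eps * rho = N) (hepse : eps ∣ e)
  (he : 0 < e) (hf : 0 < f) (heps : 0 < eps) (hrho : 0 < rho)

include hα0 hpow hef herho hepse he hf heps hrho

lemma hN0 : 0 < N := hef ▸ Nat.mul_pos he hf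

lemma exists_class {x : F} {m : ℕ} (hxm : x = α ^ m) (hm : m ≡ 0 [MOD eps]) :
    ∃ i : Fin (e / eps), x ∈ cyclo α e f (eps * (i : ℕ)) := by
  have hN : 0 < N := hN0 hα0 hpow hef herho hepse he hf heps hrho
  set w := m % e with hw
  have hwe : w < e := Nat.mod_lt _ he
  have hweps : eps ∣ w := by
    have h1 : w % eps = m % eps := Nat.mod_mod_of_dvd m hepse
    have h2 : m % eps = 0 := by simpa [Nat.ModEq] using hm
    exact Nat.dvd_of_mod_eq_zero (h1.trans h2)
  obtain ⟨i, hi⟩ := hweps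
  have hilt : i < e / eps := by
    have : eps * i < eps * (e / eps) := by
      rw [Nat.mul_div_cancel' hepse]; omega
    exact lt_of_mul_lt_mul_left this (Nat.zero_le _)
  refine ⟨⟨i, hilt⟩, ?_⟩
  rw [mem_cyclo' hN hpow hef]
  refine ⟨m, hxm, ?_⟩
  show m % e = (eps * i) % e
  rw [← hi, hw, Nat.mod_mod_of_dvd]
  exact dvd_refl e

lemma eps_mul_lt (i : Fin (e / eps)) : eps * (i : ℕ) < e := by
  have : eps * (i : ℕ) < eps * (e / eps) := (Nat.mul_lt_mul_left heps).mpr i.2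
  rwa [Nat.mul_div_cancel' hepse] at this

lemma classes_disjoint {i j : Fin (e / eps)} (hij : i ≠ j) :
    Disjoint (cyclo α e f (eps * (i:ℕ))) (cyclo α e f (eps * (j:ℕ))) := by
  have hN : 0 < N := hN0 hα0 hpow hef herho hepse he hf heps hrho
  rw [Finset.disjoint_left]
  intro x hx hy
  have h := cyclo_class_eq' hN hpow hef hx hy
  have h1 := eps_mul_lt hα0 hpow hef herho hepse he hf heps hrho i
  have h2 := eps_mul_lt hα0 hpow hef herho hepse he hf heps hrho j
  have := Nat.ModEq.eq_of_lt_of_lt h h1 h2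
  exact hij (Fin.ext (Nat.eq_of_mul_eq_mul_left heps this))

lemma famU_eq :
    famU (fun i : Fin (e / eps) => cyclo α e f (eps * (i:ℕ))) = cyclo α eps rho 0 := by
  have hN : 0 < N := hN0 hα0 hpow hef herho hepse he hf heps hrho
  ext x
  simp only [famU, Finset.mem_biUnion, Finset.mem_univ, true_and]
  constructor
  · rintro ⟨i, hi⟩
    obtain ⟨m, rfl, hm⟩ := (mem_cyclo' hN hpow hef).1 hi
    rw [mem_cyclo' hN hpow herho]
    refine ⟨m, rfl, ?_⟩
    have h1 : m ≡ eps * (i:ℕ) [MOD eps] := hm.of_dvd hepse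
    have h2 : eps * (i:ℕ) ≡ 0 [MOD eps] := (Nat.modEq_zero_iff_dvd).2 (Dvd.intro _ rfl)
    exact h1.trans h2
  · intro hx
    obtain ⟨m, hm, h0⟩ := (mem_cyclo' hN hpow herho).1 hx
    exact exists_class hα0 hpow hef herho hepse he hf heps hrho hm h0

lemma famInt_count_eq (r : ℕ) (hr : r < eps) (x : F) (hx : x ∈ cyclo α eps rho r) :
    ∑ i : Fin (e / eps), (intDiff (cyclo α e f (eps * (i:ℕ)))).count x
      = phi α e f eps rho r := by
  have hN : 0 < N := hN0 hα0 hpow hef herho hepse he hf heps hrho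
  obtain ⟨mx, hxm, hmx⟩ := (mem_cyclo' hN hpow herho).1 hx
  have hx0 : x ≠ 0 := hxm ▸ pow_ne_zero _ hα0
  calc ∑ i : Fin (e / eps), (intDiff (cyclo α e f (eps * (i:ℕ)))).count x
      = ∑ i : Fin (e / eps), ((cyclo α e f (eps * (i:ℕ)) ×ˢ cyclo α e f (eps * (i:ℕ))).filter
          fun p => p.1 ≠ p.2 ∧ p.1 - p.2 = x).card :=
        Finset.sum_congr rfl fun i _ => count_intDiff _ x
    _ = (Finset.univ.sigma fun i : Fin (e / eps) =>
          (cyclo α e f (eps * (i:ℕ)) ×ˢ cyclo α e f (eps * (i:ℕ))).filter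
            fun p => p.1 ≠ p.2 ∧ p.1 - p.2 = x).card := (Finset.card_sigma _ _).symm
    _ = (Phi α e f eps rho r).card := ?_
    _ = phi α e f eps rho r := rfl
  have hedvdN : e ∣ N := hef ▸ Dvd.intro f rfl
  have hepsdvdN : eps ∣ N := herho ▸ Dvd.intro rho rfl
  refine Finset.card_bij (fun p _ => p.2.1 * p.2.2⁻¹) ?_ ?_ ?_
  · -- maps into Phi
    rintro ⟨i, a, b⟩ hp
    simp only [Finset.mem_sigma, Finset.mem_filter, Finset.mem_product, Finset.mem_univ,
      true_and] at hp
    obtain ⟨⟨ha, hb⟩, hab, hdiff⟩ := hp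
    obtain ⟨ma, haeq, hma⟩ := (mem_cyclo' hN hpow hef).1 ha
    obtain ⟨mb, hbeq, hmb⟩ := (mem_cyclo' hN hpow hef).1 hb
    have hb0 : b ≠ 0 := hbeq ▸ pow_ne_zero _ hα0
    have hbinv : b⁻¹ = α ^ (mb * (N - 1)) := by rw [hbeq, inv_pow_exp hN hpow]
    have hteq : a * b⁻¹ = α ^ (ma + mb * (N - 1)) := by rw [haeq, hbinv, ← pow_add]
    have hmbeps : mb ≡ 0 [MOD eps] := by
      have h1 : mb ≡ eps * (i:ℕ) [MOD eps] := hmb.of_dvd hepse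
      have h2 : eps * (i:ℕ) ≡ 0 [MOD eps] :=
        (Nat.modEq_zero_iff_dvd).2 (Dvd.intro _ rfl)
      exact h1.trans h2
    simp only [Phi, Finset.mem_filter]
    refine ⟨?_, ?_, ?_⟩
    · rw [mem_cyclo' hN hpow hef]
      refine ⟨ma + mb * (N - 1), hteq, ?_⟩
      have h1 : ma + mb * (N-1) ≡ eps * (i:ℕ) + eps * (i:ℕ) * (N-1) [MOD e] :=
        hma.add (hmb.mul_right _)
      have h2 : eps * (i:ℕ) + eps * (i:ℕ) * (N-1) = eps * (i:ℕ) * N := by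
        have := Nat.mul_sub (eps * (i:ℕ)) N 1
        have h3 : eps * (i:ℕ) ≤ eps * (i:ℕ) * N := Nat.le_mul_of_pos_right _ hN
        omega
      have h4 : eps * (i:ℕ) * N ≡ 0 [MOD e] :=
        (Nat.modEq_zero_iff_dvd).2 (Dvd.dvd.mul_left hedvdN _)
      exact h1.trans (h2 ▸ h4)
    · intro h
      exact hab ((mul_inv_eq_one₀ hb0).1 h)
    · have hsub : a * b⁻¹ - 1 = (a - b) * b⁻¹ := by field_simp
      rw [hsub, hdiff, hxm, hbinv, ← pow_add]
      rw [mem_cyclo' hN hpow herho]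
      refine ⟨mx + mb * (N - 1), rfl, ?_⟩
      have h1 : mx + mb * (N-1) ≡ r + 0 * (N-1) [MOD eps] := hmx.add (hmbeps.mul_right _)
      simpa using h1
  · -- injective
    rintro ⟨i, a, b⟩ hp ⟨i', a', b'⟩ hp' heq
    simp only [Finset.mem_sigma, Finset.mem_filter, Finset.mem_product, Finset.mem_univ,
      true_and] at hp hp'
    obtain ⟨⟨ha, hb⟩, hab, hdiff⟩ := hp
    obtain ⟨⟨ha', hb'⟩, hab', hdiff'⟩ := hp'
    dsimp only at heq
    have hb0 : b ≠ 0 := fun h => absurd (h ▸ hb) (by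
      intro hmem
      obtain ⟨m, hm, _⟩ := (mem_cyclo' hN hpow hef).1 hmem
      exact pow_ne_zero _ hα0 hm.symm)
    have hb0' : b' ≠ 0 := fun h => absurd (h ▸ hb') (by
      intro hmem
      obtain ⟨m, hm, _⟩ := (mem_cyclo' hN hpow hef).1 hmem
      exact pow_ne_zero _ hα0 hm.symm)
    have ht1 : a * b⁻¹ - 1 ≠ 0 := by
      intro h
      have : a * b⁻¹ = 1 := by linear_combination h
      exact hab ((mul_inv_eq_one₀ hb0).1 this)
    have key1 : b * (a * b⁻¹ - 1) = x := by
      rw [← hdiff]; field_simp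
    have key2 : b' * (a * b⁻¹ - 1) = x := by
      rw [heq, ← hdiff']; field_simp
    have hbb : b = b' := mul_right_cancel₀ ht1 (key1.trans key2.symm)
    have haa : a = a' := by
      have h1 : a = (a * b⁻¹) * b := by field_simp
      have h2 : a' = (a' * b'⁻¹) * b' := by field_simp
      rw [h1, h2, heq, hbb]
    have hii : i = i' := by
      by_contra hne
      exact absurd (hbb ▸ hb')
        (Finset.disjoint_left.1
          (classes_disjoint hα0 hpow hef herho hepse he hf heps hrho hne) hb)
    subst hii hbb haa
    rfl
  · -- surjective
    intro t ht
    simp only [Phi, Finset.mem_filter] at ht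
    obtain ⟨htc, ht1, hts⟩ := ht
    obtain ⟨mt, hteq, hmt⟩ := (mem_cyclo' hN hpow hef).1 htc
    obtain ⟨ms, hseq, hms⟩ := (mem_cyclo' hN hpow herho).1 hts
    set mb := mx + ms * (N - 1) with hmbdef
    have hmb0 : mb ≡ 0 [MOD eps] := by
      have h1 : mb ≡ r + r * (N-1) [MOD eps] := hmx.add (hms.mul_right _)
      have h2 : r + r * (N-1) = r * N := by
        have := Nat.mul_sub r N 1
        have h3 : r ≤ r * N := Nat.le_mul_of_pos_right _ hN
        omega
      have h4 : r * N ≡ 0 [MOD eps] :=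
        (Nat.modEq_zero_iff_dvd).2 (Dvd.dvd.mul_left hepsdvdN _)
      exact h1.trans (h2 ▸ h4)
    obtain ⟨i, hbi⟩ := exists_class hα0 hpow hef herho hepse he hf heps hrho
      (rfl : (α ^ mb : F) = α ^ mb) hmb0
    set b : F := α ^ mb with hbdef
    have hb0 : b ≠ 0 := pow_ne_zero _ hα0
    have hmbe : mb ≡ eps * (i:ℕ) [MOD e] := by
      obtain ⟨m', hbeq', hm'⟩ := (mem_cyclo' hN hpow hef).1 hbi
      exact (((hpow mb m').1 hbeq').of_dvd hedvdN).trans hm'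
    have hai : t * b ∈ cyclo α e f (eps * (i:ℕ)) := by
      rw [mem_cyclo' hN hpow hef]
      refine ⟨mt + mb, by rw [hteq, pow_add], ?_⟩
      have := hmt.add hmbe
      simpa using this
    have habx : t * b - b = x := by
      have h1 : t * b - b = (t - 1) * b := by ring
      have h2 : (t - 1) * b = α ^ (ms + mb) := by rw [hseq, hbdef, ← pow_add]
      have h3 : (α : F) ^ (ms + mb) = α ^ mx := by
        rw [hpow]
        have h4 : ms + mb = mx + ms * N := by
          have := Nat.mul_sub ms N 1
          have h5 : ms ≤ ms * N := Nat.le_mul_of_pos_right _ hN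
          omega
        rw [h4]
        show (mx + ms * N) % N = mx % N
        rw [mul_comm]
        exact Nat.add_mul_mod_self_left mx N ms
      rw [h1, h2, h3, ← hxm]
    have hab : t * b ≠ b := by
      intro h
      exact hx0 (by rw [← habx, h, sub_self])
    refine ⟨⟨i, (t * b, b)⟩, ?_, ?_⟩
    · simp only [Finset.mem_sigma, Finset.mem_filter, Finset.mem_product, Finset.mem_univ,
        true_and]
      exact ⟨⟨hai, hbi⟩, hab, habx⟩
    · show t * b * b⁻¹ = t
      field_simp

end AuxMain

/-- Theorem: let `q = ef+1 = ερ+1` with `ε ∣ e`, `e > ε`, and `C₀^ε` a proper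
`(q,ef/ε,λ,μ)`-PDS.  (i) If `φ_i ≠ φ_j` for distinct `i,j ∈ {1,…,ε-1}` then `C₀^ε′` is
neither a DPDF nor an EPDF.  Otherwise, with `κ = φ₁ - φ₀`: (ii) if `κ = 0` then `C₀^ε′` is a
`(q,e/ε,f,(f-1)/ε)`-DDF and a `(q,e/ε,f,λ-(f-1)/ε,μ-(f-1)/ε)`-EPDF; (iii) if `κ = μ-λ` then
`C₀^ε′` is a `(q,e/ε,f,(e-ε)f/ε²)`-EDF and a `(q,e/ε,f,λ-(e-ε)f/ε²,μ-(e-ε)f/ε²)`-DPDF;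
(iv) if `κ ∉ {0, μ-λ}` then `C₀^ε′` is a proper `(q,e/ε,f,φ₀,φ₀+κ)`-DPDF and a proper
`(q,e/ε,f,λ-φ₀,μ-φ₀-κ)`-EPDF. -/
theorem partition_of_pds_dpdf_epdf {F : Type*} [Field F] [Fintype F] [DecidableEq F]
    (q e f eps rho : ℕ) (lam mu : ℤ) (α : F)
    (hq : Fintype.card F = q) (hα : IsPrimitiveElt α)
    (hef : q = e * f + 1) (he : 1 < e) (hf : 1 < f)
    (herho : q = eps * rho + 1) (hepse : eps ∣ e) (heps : 1 < eps) (hrho : 1 < rho)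
    (hlt : eps < e)
    (hPDS : IsPDS q rho lam mu (cyclo α eps rho 0)) (hproper : lam ≠ mu) :
    ∀ D : Fin (e / eps) → Finset F, D = (fun i : Fin (e / eps) => cyclo α e f (eps * (i : ℕ))) →
    ((∃ i j, 1 ≤ i ∧ i ≤ eps - 1 ∧ 1 ≤ j ∧ j ≤ eps - 1 ∧ i ≠ j ∧
        phi α e f eps rho i ≠ phi α e f eps rho j) →
      (¬ ∃ a b : ℤ, IsDPDF q (e / eps) f a b D) ∧
      (¬ ∃ a b : ℤ, IsEPDF q (e / eps) f a b D)) ∧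
    ((∀ j, 1 ≤ j → j ≤ eps - 1 → phi α e f eps rho j = phi α e f eps rho 1) →
      (((phi α e f eps rho 1 : ℤ) - (phi α e f eps rho 0 : ℤ) = 0 →
         ∃ a : ℕ, eps * a = f - 1 ∧ IsDDF q (e / eps) f (a : ℤ) D ∧
           IsEPDF q (e / eps) f (lam - (a : ℤ)) (mu - (a : ℤ)) D) ∧
       ((phi α e f eps rho 1 : ℤ) - (phi α e f eps rho 0 : ℤ) = mu - lam →
         ∃ b : ℕ, eps ^ 2 * b = (e - eps) * f ∧ IsEDF q (e / eps) f (b : ℤ) D ∧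
           IsDPDF q (e / eps) f (lam - (b : ℤ)) (mu - (b : ℤ)) D) ∧
       ((phi α e f eps rho 1 : ℤ) - (phi α e f eps rho 0 : ℤ) ≠ 0 →
        (phi α e f eps rho 1 : ℤ) - (phi α e f eps rho 0 : ℤ) ≠ mu - lam →
         (IsDPDF q (e / eps) f (phi α e f eps rho 0 : ℤ) (phi α e f eps rho 1 : ℤ) D ∧
          (phi α e f eps rho 0 : ℤ) ≠ (phi α e f eps rho 1 : ℤ) ∧
          IsEPDF q (e / eps) f (lam - (phi α e f eps rho 0 : ℤ))
            (mu - (phi α e f eps rho 1 : ℤ)) D ∧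
          lam - (phi α e f eps rho 0 : ℤ) ≠ mu - (phi α e f eps rho 1 : ℤ))))) := by
  intro D hD
  subst hD
  have he0 : 0 < e := by omega
  have hf0 : 0 < f := by omega
  have heps0 : 0 < eps := by omega
  have hrho0 : 0 < rho := by omega
  have h44 : 2 * 2 ≤ e * f := Nat.mul_le_mul (by omega) (by omega)
  have h3 : 3 ≤ q := by omega
  obtain ⟨hα0, hpow⟩ := prim_facts F α q hq h3 hα
  have hefN : e * f = q - 1 := by omega
  have herhoN : eps * rho = q - 1 := by omega
  have hN : 0 < q - 1 := by omega
  have hmeps : eps * (e / eps) = e := Nat.mul_div_cancel' hepse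
  have hcardD : ∀ i : Fin (e / eps), (cyclo α e f (eps * (i : ℕ))).card = f := fun i =>
    card_cyclo hN hpow hefN (eps_mul_lt hα0 hpow hefN herhoN hepse he0 hf0 heps0 hrho0 i)
  have hdisj : ∀ i j : Fin (e / eps), i ≠ j →
      Disjoint (cyclo α e f (eps * (i : ℕ))) (cyclo α e f (eps * (j : ℕ))) :=
    fun i j hij => classes_disjoint hα0 hpow hefN herhoN hepse he0 hf0 heps0 hrho0 hij
  have hshape : FamShape q (e / eps) f
      (fun i : Fin (e / eps) => cyclo α e f (eps * (i : ℕ))) :=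
    ⟨hq, Fintype.card_fin _, hcardD, hdisj⟩
  have hU : famU (fun i : Fin (e / eps) => cyclo α e f (eps * (i : ℕ))) = cyclo α eps rho 0 :=
    famU_eq hα0 hpow hefN herhoN hepse he0 hf0 heps0 hrho0
  have h0S : (0 : F) ∉ cyclo α eps rho 0 := zero_notMem_cyclo hα0
  have h0U : (0 : F) ∉ famU (fun i : Fin (e / eps) => cyclo α e f (eps * (i : ℕ))) := by
    rw [hU]; exact h0S
  have h0D : ∀ i : Fin (e / eps), (0 : F) ∉ cyclo α e f (eps * (i : ℕ)) :=
    fun _ => zero_notMem_cyclo hα0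
  have hPDScnt := hPDS.2.2
  have hInt0 : (famInt (fun i : Fin (e / eps) => cyclo α e f (eps * (i : ℕ)))).count 0 = 0 := by
    rw [count_famInt]
    refine Finset.sum_eq_zero fun i _ => ?_
    have : (intDiff (cyclo α e f (eps * (i : ℕ)))).count 0 = 0 := by
      rw [count_intDiff, Finset.card_eq_zero, Finset.eq_empty_iff_forall_notMem]
      intro p hp
      simp only [Finset.mem_filter, Finset.mem_product] at hp
      exact hp.2.1 (sub_eq_zero.mp hp.2.2)
    exact this
  have hIntS : ∀ x ∈ cyclo α eps rho 0,
      (famInt (fun i : Fin (e / eps) => cyclo α e f (eps * (i : ℕ)))).count x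
        = phi α e f eps rho 0 := fun x hx =>
    (count_famInt _ x).trans
      (famInt_count_eq hα0 hpow hefN herhoN hepse he0 hf0 heps0 hrho0 0 heps0 x hx)
  have hIntNS : ∀ x : F, x ≠ 0 → x ∉ cyclo α eps rho 0 →
      ∃ r, 1 ≤ r ∧ r ≤ eps - 1 ∧ x ∈ cyclo α eps rho r ∧
      (famInt (fun i : Fin (e / eps) => cyclo α e f (eps * (i : ℕ)))).count x
        = phi α e f eps rho r := by
    intro x hx0 hxS
    obtain ⟨k, hk⟩ := hα x hx0
    have hrlt : k % eps < eps := Nat.mod_lt _ heps0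
    have hxr : x ∈ cyclo α eps rho (k % eps) := by
      rw [mem_cyclo' hN hpow herhoN]
      exact ⟨k, hk, (Nat.mod_mod_of_dvd k dvd_rfl).symm⟩
    have hr0 : k % eps ≠ 0 := by
      intro h
      apply hxS
      rw [mem_cyclo' hN hpow herhoN]
      refine ⟨k, hk, ?_⟩
      show k % eps = 0 % eps
      rw [Nat.zero_mod]
      exact h
    refine ⟨k % eps, by omega, by omega, hxr, ?_⟩
    exact (count_famInt _ x).trans
      (famInt_count_eq hα0 hpow hefN herhoN hepse he0 hf0 heps0 hrho0 _ hrlt x hxr)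
  have hCU : ∀ x : F, (intDiff (cyclo α eps rho 0)).count x =
      (famInt (fun i : Fin (e / eps) => cyclo α e f (eps * (i : ℕ)))).count x +
      (famExt (fun i : Fin (e / eps) => cyclo α e f (eps * (i : ℕ)))).count x := by
    intro x
    rw [← hU]
    exact count_union_eq _ hdisj x
  have hExt0 : (famExt (fun i : Fin (e / eps) => cyclo α e f (eps * (i : ℕ)))).count 0 = 0 := by
    have h1 := hCU 0
    have h2 := hPDScnt 0
    rw [if_neg h0S, if_pos rfl] at h2
    have h4 : (intDiff (cyclo α eps rho 0)).count 0 = 0 := by exact_mod_cast h2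
    omega
  constructor
  · -- part (i)
    rintro ⟨i, j, h1i, hie, h1j, hje, hij, hphine⟩
    have hmem : ∀ k, 1 ≤ k → k ≤ eps - 1 →
        α ^ k ∈ cyclo α eps rho k ∧ α ^ k ∉ cyclo α eps rho 0 ∧ (α : F) ^ k ≠ 0 := by
      intro k h1k hke
      have hk1 : α ^ k ∈ cyclo α eps rho k := by
        rw [mem_cyclo' hN hpow herhoN]; exact ⟨k, rfl, Nat.ModEq.refl k⟩
      refine ⟨hk1, ?_, pow_ne_zero _ hα0⟩
      intro hmemS
      have h5 : k % eps = 0 % eps := cyclo_class_eq' hN hpow herhoN hk1 hmemS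
      rw [Nat.zero_mod] at h5
      have h6 : k % eps = k := Nat.mod_eq_of_lt (by omega)
      omega
    have hIc : ∀ k, 1 ≤ k → k ≤ eps - 1 →
        (famInt (fun i : Fin (e / eps) => cyclo α e f (eps * (i : ℕ)))).count (α ^ k)
          = phi α e f eps rho k := by
      intro k h1k hke
      exact (count_famInt _ _).trans
        (famInt_count_eq hα0 hpow hefN herhoN hepse he0 hf0 heps0 hrho0 k (by omega) _
          (hmem k h1k hke).1)
    constructor
    · rintro ⟨a, b, hdpdf⟩
      obtain ⟨-, -, hcnt⟩ := hdpdf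
      have hval : ∀ k, 1 ≤ k → k ≤ eps - 1 → (phi α e f eps rho k : ℤ) = b := by
        intro k h1k hke
        obtain ⟨hk1, hkS, hk0⟩ := hmem k h1k hke
        have h5 := hcnt (α ^ k)
        rw [if_neg (by rw [hU]; exact hkS), if_neg hk0] at h5
        rw [hIc k h1k hke] at h5
        exact h5
      have := (hval i h1i hie).trans (hval j h1j hje).symm
      exact hphine (by exact_mod_cast this)
    · rintro ⟨a, b, hepdf⟩
      obtain ⟨-, -, hcnt⟩ := hepdf
      have hval : ∀ k, 1 ≤ k → k ≤ eps - 1 → mu - (phi α e f eps rho k : ℤ) = b := by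
        intro k h1k hke
        obtain ⟨hk1, hkS, hk0⟩ := hmem k h1k hke
        have h5 := hcnt (α ^ k)
        rw [if_neg (by rw [hU]; exact hkS), if_neg hk0] at h5
        have h6 := hCU (α ^ k)
        have h7 := hPDScnt (α ^ k)
        rw [if_neg hkS, if_neg hk0] at h7
        have h8 := hIc k h1k hke
        omega
      have := (hval i h1i hie).trans (hval j h1j hje).symm
      exact hphine (by omega)
  · -- parts (ii)-(iv)
    intro hall
    have hphiNS : ∀ x : F, x ≠ 0 → x ∉ cyclo α eps rho 0 →
        (famInt (fun i : Fin (e / eps) => cyclo α e f (eps * (i : ℕ)))).count x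
          = phi α e f eps rho 1 := by
      intro x hx0 hxS
      obtain ⟨r, h1r, hre, _, hcnt⟩ := hIntNS x hx0 hxS
      rw [hcnt, hall r h1r hre]
    refine ⟨?_, ?_, ?_⟩
    · -- (ii) kappa = 0
      intro hk
      have hconst : ∀ x : F, x ≠ 0 →
          (famInt (fun i : Fin (e / eps) => cyclo α e f (eps * (i : ℕ)))).count x
            = phi α e f eps rho 0 := by
        intro x hx0
        by_cases hxS : x ∈ cyclo α eps rho 0
        · exact hIntS x hxS
        · rw [hphiNS x hx0 hxS]; omega
      refine ⟨phi α e f eps rho 0, ?_, ⟨hshape, ?_⟩, hshape, h0D, ?_⟩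
      · -- eps * phi0 = f - 1
        have htot : Multiset.card
            (famInt (fun i : Fin (e / eps) => cyclo α e f (eps * (i : ℕ))))
              = phi α e f eps rho 0 * (q - 1) := by
          have := total_count _ _ hInt0 hconst
          rwa [hq] at this
        have hcardInt : Multiset.card
            (famInt (fun i : Fin (e / eps) => cyclo α e f (eps * (i : ℕ))))
              = (e / eps) * (f * (f - 1)) := by
          rw [famInt, mcard_sum]
          have hterm : ∀ i : Fin (e / eps),
              Multiset.card (intDiff (cyclo α e f (eps * (i : ℕ)))) = f * (f - 1) := by
            intro i
            rw [card_intDiff, hcardD i]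
          rw [Finset.sum_congr rfl fun i _ => hterm i, Finset.sum_const,
            Finset.card_univ, Fintype.card_fin, smul_eq_mul]
        have hfin : (eps * phi α e f eps rho 0) * (e * f) = (f - 1) * (e * f) := by
          calc (eps * phi α e f eps rho 0) * (e * f)
              = eps * (phi α e f eps rho 0 * (e * f)) := by ring
            _ = eps * (phi α e f eps rho 0 * (q - 1)) := by rw [hefN]
            _ = eps * ((e / eps) * (f * (f - 1))) := by rw [← htot, hcardInt]
            _ = (eps * (e / eps)) * (f * (f - 1)) := by ring
            _ = e * (f * (f - 1)) := by rw [hmeps]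
            _ = (f - 1) * (e * f) := by ring
        exact Nat.eq_of_mul_eq_mul_right (Nat.mul_pos he0 hf0) hfin
      · -- DDF count
        intro x
        by_cases hx0 : x = 0
        · subst hx0; rw [if_pos rfl]; exact_mod_cast hInt0
        · rw [if_neg hx0]; exact_mod_cast hconst x hx0
      · -- EPDF count
        intro x
        by_cases hx0 : x = 0
        · subst hx0; rw [if_neg h0U, if_pos rfl]; exact_mod_cast hExt0
        · by_cases hxS : x ∈ cyclo α eps rho 0
          · rw [if_pos (by rw [hU]; exact hxS)]
            have h6 := hCU x
            have h7 := hPDScnt x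
            rw [if_pos hxS] at h7
            have h8 := hIntS x hxS
            omega
          · rw [if_neg (by rw [hU]; exact hxS), if_neg hx0]
            have h6 := hCU x
            have h7 := hPDScnt x
            rw [if_neg hxS, if_neg hx0] at h7
            have h8 := hphiNS x hx0 hxS
            omega
    · -- (iii) kappa = mu - lam
      intro hk
      have h1S : (1 : F) ∈ cyclo α eps rho 0 := by
        rw [mem_cyclo' hN hpow herhoN]
        exact ⟨0, (pow_zero α).symm, Nat.ModEq.refl 0⟩
      have hbval : ((famExt (fun i : Fin (e / eps) =>
          cyclo α e f (eps * (i : ℕ)))).count 1 : ℤ) = lam - phi α e f eps rho 0 := by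
        have h6 := hCU 1
        have h7 := hPDScnt 1
        rw [if_pos h1S] at h7
        have h8 := hIntS 1 h1S
        omega
      have hExtConst : ∀ x : F, x ≠ 0 →
          (famExt (fun i : Fin (e / eps) => cyclo α e f (eps * (i : ℕ)))).count x
            = (famExt (fun i : Fin (e / eps) => cyclo α e f (eps * (i : ℕ)))).count 1 := by
        intro x hx0
        have h6 := hCU x
        have h7 := hPDScnt x
        by_cases hxS : x ∈ cyclo α eps rho 0
        · rw [if_pos hxS] at h7
          have h8 := hIntS x hxS
          omega
        · rw [if_neg hxS, if_neg hx0] at h7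
          have h8 := hphiNS x hx0 hxS
          omega
      refine ⟨(famExt (fun i : Fin (e / eps) => cyclo α e f (eps * (i : ℕ)))).count 1,
        ?_, ⟨hshape, ?_⟩, hshape, h0D, ?_⟩
      · -- eps^2 * b = (e - eps) * f
        have htot : Multiset.card
            (famExt (fun i : Fin (e / eps) => cyclo α e f (eps * (i : ℕ))))
              = (famExt (fun i : Fin (e / eps) => cyclo α e f (eps * (i : ℕ)))).count 1
                * (q - 1) := by
          have := total_count _ _ hExt0 hExtConst
          rwa [hq] at this
        have hcardExt : Multiset.card
            (famExt (fun i : Fin (e / eps) => cyclo α e f (eps * (i : ℕ))))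
              = (e / eps) * (((e / eps) - 1) * (f * f)) := by
          rw [famExt, mcard_sum]
          have hinner : ∀ i : Fin (e / eps),
              Multiset.card (∑ j : Fin (e / eps), if j = i then 0 else
                extDiff (cyclo α e f (eps * (i : ℕ))) (cyclo α e f (eps * (j : ℕ))))
                = ((e / eps) - 1) * (f * f) := by
            intro i
            rw [mcard_sum]
            have hterm : ∀ j : Fin (e / eps),
                Multiset.card (if j = i then 0 else
                  extDiff (cyclo α e f (eps * (i : ℕ))) (cyclo α e f (eps * (j : ℕ))))
                  = if j = i then 0 else f * f := by
              intro j
              split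
              · simp
              · rw [card_extDiff, hcardD i, hcardD j]
            rw [Finset.sum_congr rfl fun j _ => hterm j,
              ← Finset.add_sum_erase _ _ (Finset.mem_univ i), if_pos rfl, zero_add,
              Finset.sum_congr rfl (fun j hj => if_neg (Finset.ne_of_mem_erase hj)),
              Finset.sum_const, smul_eq_mul,
              Finset.card_erase_of_mem (Finset.mem_univ i), Finset.card_univ,
              Fintype.card_fin]
          rw [Finset.sum_congr rfl fun i _ => hinner i, Finset.sum_const, smul_eq_mul,
            Finset.card_univ, Fintype.card_fin]
        have hmsub : eps * ((e / eps) - 1) = e - eps := by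
          rw [Nat.mul_sub, mul_one, hmeps]
        have hfin : (eps ^ 2 * (famExt (fun i : Fin (e / eps) =>
            cyclo α e f (eps * (i : ℕ)))).count 1) * (e * f)
              = ((e - eps) * f) * (e * f) := by
          calc (eps ^ 2 * (famExt (fun i : Fin (e / eps) =>
              cyclo α e f (eps * (i : ℕ)))).count 1) * (e * f)
              = (eps * eps) * ((famExt (fun i : Fin (e / eps) =>
                cyclo α e f (eps * (i : ℕ)))).count 1 * (e * f)) := by ring
            _ = (eps * eps) * ((famExt (fun i : Fin (e / eps) =>
                cyclo α e f (eps * (i : ℕ)))).count 1 * (q - 1)) := by rw [hefN]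
            _ = (eps * eps) * ((e / eps) * (((e / eps) - 1) * (f * f))) := by
                rw [← htot, hcardExt]
            _ = (eps * (e / eps)) * ((eps * ((e / eps) - 1)) * (f * f)) := by ring
            _ = e * ((e - eps) * (f * f)) := by rw [hmeps, hmsub]
            _ = ((e - eps) * f) * (e * f) := by ring
        exact Nat.eq_of_mul_eq_mul_right (Nat.mul_pos he0 hf0) hfin
      · -- EDF count
        intro x
        by_cases hx0 : x = 0
        · subst hx0; rw [if_pos rfl]; exact_mod_cast hExt0
        · rw [if_neg hx0]; exact_mod_cast hExtConst x hx0
      · -- DPDF count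
        intro x
        by_cases hx0 : x = 0
        · subst hx0; rw [if_neg h0U, if_pos rfl]; exact_mod_cast hInt0
        · by_cases hxS : x ∈ cyclo α eps rho 0
          · rw [if_pos (by rw [hU]; exact hxS)]
            have h8 := hIntS x hxS
            omega
          · rw [if_neg (by rw [hU]; exact hxS), if_neg hx0]
            have h8 := hphiNS x hx0 hxS
            omega
    · -- (iv)
      intro hk0 hkm
      have hDPDFcnt : ∀ x : F,
          ((famInt (fun i : Fin (e / eps) => cyclo α e f (eps * (i : ℕ)))).count x : ℤ) =
            if x ∈ famU (fun i : Fin (e / eps) => cyclo α e f (eps * (i : ℕ)))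
              then (phi α e f eps rho 0 : ℤ)
              else if x = 0 then 0 else (phi α e f eps rho 1 : ℤ) := by
        intro x
        by_cases hx0 : x = 0
        · subst hx0; rw [if_neg h0U, if_pos rfl]; exact_mod_cast hInt0
        · by_cases hxS : x ∈ cyclo α eps rho 0
          · rw [if_pos (by rw [hU]; exact hxS)]
            exact_mod_cast hIntS x hxS
          · rw [if_neg (by rw [hU]; exact hxS), if_neg hx0]
            exact_mod_cast hphiNS x hx0 hxS
      have hEPDFcnt : ∀ x : F,
          ((famExt (fun i : Fin (e / eps) => cyclo α e f (eps * (i : ℕ)))).count x : ℤ) =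
            if x ∈ famU (fun i : Fin (e / eps) => cyclo α e f (eps * (i : ℕ)))
              then lam - (phi α e f eps rho 0 : ℤ)
              else if x = 0 then 0 else mu - (phi α e f eps rho 1 : ℤ) := by
        intro x
        by_cases hx0 : x = 0
        · subst hx0; rw [if_neg h0U, if_pos rfl]; exact_mod_cast hExt0
        · have h6 := hCU x
          have h7 := hPDScnt x
          by_cases hxS : x ∈ cyclo α eps rho 0
          · rw [if_pos (by rw [hU]; exact hxS)]
            rw [if_pos hxS] at h7
            have h8 := hIntS x hxS
            omega
          · rw [if_neg (by rw [hU]; exact hxS), if_neg hx0]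
            rw [if_neg hxS, if_neg hx0] at h7
            have h8 := hphiNS x hx0 hxS
            omega
      exact ⟨⟨hshape, h0D, hDPDFcnt⟩, by omega, ⟨hshape, h0D, hEPDFcnt⟩, by omega⟩
end
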